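/- arXiv:1510.02652 — 5 statements merged into one kernel-verified Lean document; each statement's English description precedes it below -/
import Mathlib

section
/- Let k ≥ 1, let n_0 > 1 be real, and suppose 0 ≤ s < 1. Let A_0, …, A_{k−1} be analytic on the unit disk D and satisfy sup_{z∈D} (1−|z|²)^s |A_j(z)| < ∞ for every j = 0, …, k−1. Suppose there exist θ ∈ [0, 2π) and ν ∈ [0,1) such that z_θ = ν e^{iθ} ∈ D satisfies A_j(z_θ) ≠ 0 for some j ∈ {0, …, k−1}. Then every analytic solution f on D of the equation (f^{(k)})^{n_0} + A_{k−1}(z)(f^{(k−1)})^{n_0} + ⋯ + A_1(z)(f')^{n_0} + A_0(z) f^{n_0} = 0 is bounded on D, i.e. f belongs to H^∞. -/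
open MeasureTheory Metric Set


/-- Two-term subadditivity of `x ↦ x^(1/p)` for `p ≥ 1`. -/
lemma my_rpow_add_le {x y p : ℝ} (hx : 0 ≤ x) (hy : 0 ≤ y) (hp : 1 ≤ p) :
    (x + y) ^ (1/p) ≤ x ^ (1/p) + y ^ (1/p) := by
  have hp0 : (0:ℝ) < p := lt_of_lt_of_le one_pos hp
  lift x to NNReal using hx
  lift y to NNReal using hy
  have h := NNReal.rpow_add_rpow_le_add (x ^ (1/p)) (y ^ (1/p)) hp
  rw [← NNReal.rpow_mul, ← NNReal.rpow_mul, one_div, inv_mul_cancel₀ hp0.ne',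
    NNReal.rpow_one, NNReal.rpow_one] at h
  have h' := (NNReal.coe_le_coe).mpr h
  push_cast at h' ⊢
  simpa [one_div] using h'

lemma my_sum_rpow_le {ι : Type*} (s : Finset ι) (f : ι → ℝ) (hf : ∀ i ∈ s, 0 ≤ f i)
    {p : ℝ} (hp : 1 ≤ p) :
    (∑ i ∈ s, f i) ^ (1/p) ≤ ∑ i ∈ s, f i ^ (1/p) := by
  have hp0 : (0:ℝ) < p := lt_of_lt_of_le one_pos hp
  induction s using Finset.cons_induction with
  | empty => simp [Real.zero_rpow (by positivity : p⁻¹ ≠ 0)]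
  | cons a s ha ih =>
    rw [Finset.sum_cons, Finset.sum_cons]
    have h1 : 0 ≤ f a := hf a (Finset.mem_cons_self a s)
    have h2 : 0 ≤ ∑ i ∈ s, f i :=
      Finset.sum_nonneg fun i hi => hf i (Finset.mem_cons_of_mem hi)
    refine le_trans (my_rpow_add_le h1 h2 hp) ?_
    exact add_le_add_right (ih fun i hi => hf i (Finset.mem_cons_of_mem hi)) _


lemma my_gronwall {w g : ℝ → ℝ} {a : ℝ}
    (hw : Continuous w) (hg : Continuous g)
    (hg0 : ∀ t, 0 ≤ g t) (hw0 : ∀ t, 0 ≤ w t)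
    (h : ∀ t ∈ Icc (0:ℝ) 1, w t ≤ a + ∫ τ in (0:ℝ)..t, g τ * w τ) :
    ∀ t ∈ Icc (0:ℝ) 1, w t ≤ a * Real.exp (∫ τ in (0:ℝ)..t, g τ) := by
  set W : ℝ → ℝ := fun t => a + ∫ τ in (0:ℝ)..t, g τ * w τ with hWdef
  set G : ℝ → ℝ := fun t => ∫ τ in (0:ℝ)..t, g τ with hGdef
  set Φ : ℝ → ℝ := fun t => W t * Real.exp (-G t) with hΦdef
  have hgw : Continuous fun τ => g τ * w τ := hg.mul hw
  have hWd : ∀ t, HasDerivAt W (g t * w t) t := fun t =>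
    ((hgw.integral_hasStrictDerivAt 0 t).hasDerivAt).const_add a
  have hGd : ∀ t, HasDerivAt G (g t) t := fun t =>
    (hg.integral_hasStrictDerivAt 0 t).hasDerivAt
  have hΦd : ∀ t, HasDerivAt Φ
      (g t * w t * Real.exp (-G t) + W t * (Real.exp (-G t) * -(g t))) t := by
    intro t
    exact (hWd t).mul (((hGd t).neg).exp)
  have hanti : AntitoneOn Φ (Icc 0 1) := by
    apply antitoneOn_of_deriv_nonpos (convex_Icc 0 1)
    · exact Continuous.continuousOn
        (continuous_iff_continuousAt.mpr fun t => (hΦd t).continuousAt)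
    · intro t ht
      exact (hΦd t).differentiableAt.differentiableWithinAt
    · intro t ht
      rw [interior_Icc] at ht
      rw [(hΦd t).deriv]
      have hwW : w t ≤ W t := h t ⟨ht.1.le, ht.2.le⟩
      have hE : 0 < Real.exp (-G t) := Real.exp_pos _
      nlinarith [mul_le_mul_of_nonneg_left hwW (hg0 t), hg0 t]
  intro t ht
  have h0 : Φ t ≤ Φ 0 := hanti (left_mem_Icc.mpr one_pos.le) ht ht.1
  have hΦ0 : Φ 0 = a := by
    simp [hΦdef, hWdef, hGdef, intervalIntegral.integral_same]
  rw [hΦ0] at h0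
  have hWt : w t ≤ W t := h t ht
  have hE : 0 < Real.exp (G t) := Real.exp_pos _
  have : W t = Φ t * Real.exp (G t) := by
    rw [hΦdef]
    simp only [mul_assoc, ← Real.exp_add]
    simp
  rw [hGdef] at *
  calc w t ≤ W t := hWt
    _ = Φ t * Real.exp (G t) := this
    _ ≤ a * Real.exp (G t) := mul_le_mul_of_nonneg_right h0 hE.le

lemma my_key_bound (k : ℕ) {n0 s : ℝ} (hn0 : 1 < n0) (hs0 : 0 ≤ s)
    (A F : ℕ → ℂ → ℂ) (Mf : ℕ → ℝ)
    (hM : ∀ j ∈ Finset.range k, ∀ z ∈ ball (0:ℂ) 1,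
      (1 - ‖z‖ ^ 2) ^ s * ‖A j z‖ ≤ Mf j)
    {z : ℂ} (hz : z ∈ ball (0:ℂ) 1)
    (heq : (F k z) ^ ((n0 : ℝ) : ℂ) +
      ∑ j ∈ Finset.range k, A j z * (F j z) ^ ((n0 : ℝ) : ℂ) = 0) :
    ‖F k z‖ ≤
      (∑ j ∈ Finset.range k, (max (Mf j) 0) ^ (1/n0)) *
        (1 - ‖z‖) ^ (-(s/n0)) * ∑ j ∈ Finset.range k, ‖F j z‖ := by
  have hn0' : (0:ℝ) < n0 := lt_trans one_pos hn0
  have hz1 : ‖z‖ < 1 := by rwa [mem_ball, dist_zero_right] at hz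
  have hz0 : (0:ℝ) ≤ ‖z‖ := norm_nonneg z
  have h1z : (0:ℝ) < 1 - ‖z‖ := by linarith
  have hsq : ‖z‖ ^ 2 ≤ ‖z‖ := by nlinarith
  have h1z2 : (0:ℝ) < 1 - ‖z‖ ^ 2 := by nlinarith
  have h12 : 1 - ‖z‖ ≤ 1 - ‖z‖ ^ 2 := by nlinarith
  -- step 1 : |F k z| ^ n0 ≤ ∑ |A j z| * |F j z| ^ n0
  have hFneg : (F k z) ^ ((n0 : ℝ) : ℂ) = -∑ j ∈ Finset.range k, A j z * (F j z) ^ ((n0 : ℝ) : ℂ) :=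
    eq_neg_of_add_eq_zero_left heq
  have step1 : ‖F k z‖ ^ n0 ≤
      ∑ j ∈ Finset.range k, ‖A j z‖ * ‖F j z‖ ^ n0 := by
    calc ‖F k z‖ ^ n0 = ‖(F k z) ^ ((n0 : ℝ) : ℂ)‖ :=
          (Complex.norm_cpow_real _ _).symm
      _ = ‖∑ j ∈ Finset.range k, A j z * (F j z) ^ ((n0 : ℝ) : ℂ)‖ := by
          rw [hFneg, norm_neg]
      _ ≤ ∑ j ∈ Finset.range k, ‖A j z * (F j z) ^ ((n0 : ℝ) : ℂ)‖ :=
          norm_sum_le _ _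
      _ = ∑ j ∈ Finset.range k, ‖A j z‖ * ‖F j z‖ ^ n0 := by
          refine Finset.sum_congr rfl fun j _ => ?_
          rw [norm_mul, Complex.norm_cpow_real]
  -- step 2
  have step2 : ‖F k z‖ ≤
      ∑ j ∈ Finset.range k, ‖A j z‖ ^ (1/n0) * ‖F j z‖ := by
    have h0 : ‖F k z‖ = (‖F k z‖ ^ n0) ^ (1/n0) := by
      rw [one_div, Real.rpow_rpow_inv (norm_nonneg _) hn0'.ne']
    rw [h0]
    calc (‖F k z‖ ^ n0) ^ (1/n0)
        ≤ (∑ j ∈ Finset.range k, ‖A j z‖ * ‖F j z‖ ^ n0) ^ (1/n0) :=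
          Real.rpow_le_rpow (by positivity) step1 (by positivity)
      _ ≤ ∑ j ∈ Finset.range k, (‖A j z‖ * ‖F j z‖ ^ n0) ^ (1/n0) :=
          my_sum_rpow_le _ _ (fun j _ => by positivity) hn0.le
      _ = ∑ j ∈ Finset.range k, ‖A j z‖ ^ (1/n0) * ‖F j z‖ := by
          refine Finset.sum_congr rfl fun j _ => ?_
          rw [Real.mul_rpow (norm_nonneg _) (by positivity), one_div,
            Real.rpow_rpow_inv (norm_nonneg _) hn0'.ne']
  -- step 3 : coefficient bound
  have step3 : ∀ j ∈ Finset.range k, ‖A j z‖ ^ (1/n0) ≤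
      (max (Mf j) 0) ^ (1/n0) * (1 - ‖z‖) ^ (-(s/n0)) := by
    intro j hj
    have h1 := hM j hj z hz
    have hpos : (0:ℝ) < (1 - ‖z‖ ^ 2) ^ s := Real.rpow_pos_of_pos h1z2 s
    have h2 : (1 - ‖z‖ ^ 2) ^ s * ‖A j z‖ ≤ max (Mf j) 0 :=
      le_trans h1 (le_max_left _ _)
    have hA1 : ‖A j z‖ ≤ max (Mf j) 0 * (1 - ‖z‖ ^ 2) ^ (-s) := by
      rw [Real.rpow_neg h1z2.le, ← div_eq_mul_inv, le_div_iff₀ hpos]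
      linarith [h2, mul_comm ((1 - ‖z‖ ^ 2) ^ s) (‖A j z‖)]
    calc ‖A j z‖ ^ (1/n0)
        ≤ (max (Mf j) 0 * (1 - ‖z‖ ^ 2) ^ (-s)) ^ (1/n0) :=
          Real.rpow_le_rpow (norm_nonneg _) hA1 (by positivity)
      _ = (max (Mf j) 0) ^ (1/n0) * (1 - ‖z‖ ^ 2) ^ (-(s/n0)) := by
          rw [Real.mul_rpow (le_max_right _ _) (Real.rpow_nonneg h1z2.le _),
            ← Real.rpow_mul h1z2.le]
          congr 2
          field_simp
      _ ≤ (max (Mf j) 0) ^ (1/n0) * (1 - ‖z‖) ^ (-(s/n0)) := by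
          refine mul_le_mul_of_nonneg_left ?_ (Real.rpow_nonneg (le_max_right _ _) _)
          exact Real.rpow_le_rpow_of_nonpos h1z h12
            (neg_nonpos.mpr (div_nonneg hs0 hn0'.le))
  -- combine
  set S := ∑ j ∈ Finset.range k, ‖F j z‖ with hS
  have hS0 : ∀ j ∈ Finset.range k, ‖F j z‖ ≤ S := fun j hj =>
    Finset.single_le_sum (fun i _ => norm_nonneg (F i z)) hj
  calc ‖F k z‖
      ≤ ∑ j ∈ Finset.range k, ‖A j z‖ ^ (1/n0) * ‖F j z‖ := step2
    _ ≤ ∑ j ∈ Finset.range k,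
        (max (Mf j) 0) ^ (1/n0) * (1 - ‖z‖) ^ (-(s/n0)) * S := by
        refine Finset.sum_le_sum fun j hj => ?_
        refine le_trans (mul_le_mul_of_nonneg_right (step3 j hj) (norm_nonneg _)) ?_
        exact mul_le_mul_of_nonneg_left (hS0 j hj)
          (mul_nonneg (Real.rpow_nonneg (le_max_right _ _) _) (Real.rpow_nonneg h1z.le _))
    _ = (∑ j ∈ Finset.range k, (max (Mf j) 0) ^ (1/n0)) *
        (1 - ‖z‖) ^ (-(s/n0)) * S := by
        rw [Finset.sum_mul, Finset.sum_mul]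

theorem stmt5 (k : ℕ) (hk : 1 ≤ k) (n0 s : ℝ) (hn0 : 1 < n0)
    (hs0 : 0 ≤ s) (hs1 : s < 1)
    (A : ℕ → ℂ → ℂ) (hA : ∀ j < k, DifferentiableOn ℂ (A j) (ball (0:ℂ) 1))
    (hAs : ∀ j < k, ∃ M : ℝ, ∀ z ∈ ball (0:ℂ) 1,
      (1 - ‖z‖ ^ 2) ^ s * ‖A j z‖ ≤ M)
    (hzθ : ∃ θ ∈ Set.Ico (0:ℝ) (2 * Real.pi), ∃ ν ∈ Set.Ico (0:ℝ) 1, ∃ j < k,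
      A j ((ν : ℂ) * Complex.exp ((θ : ℂ) * Complex.I)) ≠ 0) :
    ∀ f : ℂ → ℂ, DifferentiableOn ℂ f (ball (0:ℂ) 1) →
      (∀ z ∈ ball (0:ℂ) 1,
        (iteratedDeriv k f z) ^ ((n0 : ℝ) : ℂ) +
          ∑ j ∈ Finset.range k, A j z * (iteratedDeriv j f z) ^ ((n0 : ℝ) : ℂ) = 0) →
      ∃ M : ℝ, ∀ z ∈ ball (0:ℂ) 1, ‖f z‖ ≤ M := by
  intro f hf hEq
  classical
  have hn0' : (0:ℝ) < n0 := lt_trans one_pos hn0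
  -- analyticity of iterated derivatives
  have han : AnalyticOnNhd ℂ f (ball (0:ℂ) 1) := hf.analyticOnNhd isOpen_ball
  have hFan : ∀ j : ℕ, AnalyticOnNhd ℂ (iteratedDeriv j f) (ball (0:ℂ) 1) := by
    intro j
    induction j with
    | zero => simpa [iteratedDeriv_zero] using han
    | succ j ih => rw [iteratedDeriv_succ]; exact ih.deriv
  have hFd : ∀ j : ℕ, ∀ x ∈ ball (0:ℂ) 1,
      HasDerivAt (iteratedDeriv j f) (iteratedDeriv (j+1) f x) x := by
    intro j x hx
    have h1 := ((hFan j) x hx).differentiableAt.hasDerivAt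
    rwa [iteratedDeriv_succ]
  have hFc : ∀ j : ℕ, ContinuousOn (iteratedDeriv j f) (ball (0:ℂ) 1) :=
    fun j => (hFan j).continuousOn
  -- coefficient bounds
  have hAs2 : ∀ j : ℕ, ∃ Mj : ℝ, ∀ z ∈ ball (0:ℂ) 1, j < k →
      (1 - ‖z‖ ^ 2) ^ s * ‖A j z‖ ≤ Mj := by
    intro j
    by_cases hj : j < k
    · obtain ⟨M, hM⟩ := hAs j hj
      exact ⟨M, fun z hz _ => hM z hz⟩
    · exact ⟨0, fun z hz hj' => absurd hj' hj⟩
  choose Mf hMf using hAs2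
  have hM : ∀ j ∈ Finset.range k, ∀ z ∈ ball (0:ℂ) 1,
      (1 - ‖z‖ ^ 2) ^ s * ‖A j z‖ ≤ Mf j :=
    fun j hj z hz => hMf j z hz (Finset.mem_range.mp hj)
  set C : ℝ := ∑ j ∈ Finset.range k, (max (Mf j) 0) ^ (1/n0) with hCdef
  have hC0 : 0 ≤ C :=
    Finset.sum_nonneg fun j _ => Real.rpow_nonneg (le_max_right _ _) _
  set α : ℝ := s / n0 with hαdef
  have hα0 : 0 ≤ α := div_nonneg hs0 hn0'.le
  have hα1 : α < 1 := by rw [hαdef, div_lt_one hn0']; linarith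
  have hkey : ∀ x ∈ ball (0:ℂ) 1, ‖iteratedDeriv k f x‖ ≤
      C * (1 - ‖x‖) ^ (-α) * ∑ j ∈ Finset.range k, ‖iteratedDeriv j f x‖ :=
    fun x hx => my_key_bound k hn0 hs0 A (fun j => iteratedDeriv j f) Mf hM hx (hEq x hx)
  refine ⟨(∑ j ∈ Finset.range k, ‖iteratedDeriv j f 0‖) *
    Real.exp ((k:ℝ) * (1 + C * (1-α)⁻¹)), ?_⟩
  intro z hz
  set r : ℝ := ‖z‖ with hrdef
  have hr1 : r < 1 := by rwa [mem_ball, dist_zero_right] at hz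
  have hr0 : 0 ≤ r := norm_nonneg z
  -- clamped path
  set c : ℝ → ℝ := fun t => max 0 (min t 1) with hcdef
  have hc0 : ∀ t, 0 ≤ c t := fun t => le_max_left _ _
  have hc1 : ∀ t, c t ≤ 1 := fun t => max_le zero_le_one (min_le_right _ _)
  have hccont : Continuous c := continuous_const.max (continuous_id.min continuous_const)
  have hceq : ∀ t ∈ Icc (0:ℝ) 1, c t = t := by
    intro t ht
    rw [hcdef]
    simp only
    rw [min_eq_left ht.2, max_eq_right ht.1]
  set P : ℝ → ℂ := fun t => ((c t : ℝ) : ℂ) * z with hPdef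
  have hPabs : ∀ t, ‖P t‖ = c t * r := by
    intro t
    rw [hPdef]
    simp only [norm_mul, Complex.norm_real, Real.norm_eq_abs, abs_of_nonneg (hc0 t), hrdef]
  have hcr : ∀ t, c t * r ≤ r := fun t =>
    mul_le_of_le_one_left hr0 (hc1 t)
  have hPball : ∀ t, P t ∈ ball (0:ℂ) 1 := by
    intro t
    rw [mem_ball, dist_zero_right, hPabs]
    exact lt_of_le_of_lt (hcr t) hr1
  have hPcont : Continuous P := (Complex.continuous_ofReal.comp hccont).mul continuous_const
  set w : ℝ → ℝ := fun t => ∑ j ∈ Finset.range k, ‖iteratedDeriv j f (P t)‖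
    with hwdef
  have hFPcont : ∀ j : ℕ, Continuous fun t => iteratedDeriv j f (P t) := fun j =>
    (hFc j).comp_continuous hPcont hPball
  have hwcont : Continuous w := continuous_finset_sum _ fun j _ =>
    continuous_norm.comp (hFPcont j)
  have hw0 : ∀ t, 0 ≤ w t := fun t =>
    Finset.sum_nonneg fun j _ => norm_nonneg _
  set g : ℝ → ℝ := fun t => (k:ℝ) * (1 + C * (1 - c t * r) ^ (-α)) with hgdef
  have hbase : ∀ t, 0 < 1 - c t * r := fun t => by linarith [hcr t, hr1]
  have hgcont : Continuous g := by
    apply continuous_const.mul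
    apply continuous_const.add
    apply continuous_const.mul
    exact Continuous.rpow_const (continuous_const.sub (hccont.mul continuous_const))
      (fun t => Or.inl (hbase t).ne')
  have hone_le : ∀ t : ℝ, (1:ℝ) ≤ 1 + C * (1 - c t * r) ^ (-α) := fun t =>
    le_add_of_nonneg_right (mul_nonneg hC0 (Real.rpow_nonneg (hbase t).le _))
  have hg0 : ∀ t, 0 ≤ g t := fun t =>
    mul_nonneg (Nat.cast_nonneg k) (le_trans zero_le_one (hone_le t))
  -- the integral inequality
  have hii : ∀ t ∈ Icc (0:ℝ) 1, w t ≤ w 0 + ∫ τ in (0:ℝ)..t, g τ * w τ := by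
    intro t ht
    obtain ⟨ht0, ht1⟩ := ht
    set Q : ℝ → ℂ := fun τ => ((τ : ℝ) : ℂ) * z with hQdef
    have hPQ : ∀ τ ∈ Icc (0:ℝ) 1, P τ = Q τ := by
      intro τ hτ
      rw [hPdef, hQdef]
      simp only
      rw [hceq τ hτ]
    have hQabs : ∀ τ ∈ Icc (0:ℝ) 1, ‖Q τ‖ = τ * r := by
      intro τ hτ
      rw [← hPQ τ hτ, hPabs, hceq τ hτ]
    have hQball : ∀ τ ∈ Icc (0:ℝ) 1, Q τ ∈ ball (0:ℂ) 1 := by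
      intro τ hτ
      rw [← hPQ τ hτ]
      exact hPball τ
    have hsub : Icc (0:ℝ) t ⊆ Icc (0:ℝ) 1 := Icc_subset_Icc le_rfl ht1
    have hQd : ∀ τ : ℝ, HasDerivAt Q z τ := by
      intro τ
      have h1 : HasDerivAt (fun τ : ℝ => ((τ:ℝ):ℂ)) 1 τ := by
        simpa using (hasDerivAt_id τ).ofReal_comp
      simpa using h1.mul_const z
    have hQcont : Continuous Q := Complex.continuous_ofReal.mul continuous_const
    set B : ℝ → ℝ := fun τ => (1 + C * (1 - τ * r) ^ (-α)) * w τ with hBdef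
    have hbase' : ∀ τ ∈ Icc (0:ℝ) 1, 0 < 1 - τ * r := by
      intro τ hτ
      have : τ * r ≤ r := mul_le_of_le_one_left hr0 hτ.2
      linarith
    have hBcont : ContinuousOn B (Icc (0:ℝ) 1) := by
      apply ContinuousOn.mul ?_ hwcont.continuousOn
      apply continuousOn_const.add
      apply continuousOn_const.mul
      exact ContinuousOn.rpow_const
        ((continuous_const.sub (continuous_id.mul continuous_const)).continuousOn)
        (fun τ hτ => Or.inl (hbase' τ hτ).ne')
    have hBint : IntervalIntegrable B volume 0 t :=
      (hBcont.mono (by rw [uIcc_of_le ht0]; exact hsub)).intervalIntegrable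
    have hB0 : ∀ τ ∈ Icc (0:ℝ) 1, 0 ≤ B τ :=
      fun τ hτ => mul_nonneg (le_trans zero_le_one (le_add_of_nonneg_right
        (mul_nonneg hC0 (Real.rpow_nonneg (hbase' τ hτ).le _)))) (hw0 τ)
    -- per-derivative estimate
    have hjineq : ∀ j ∈ Finset.range k,
        ‖iteratedDeriv j f (Q t)‖ ≤
          ‖iteratedDeriv j f 0‖ + ∫ τ in (0:ℝ)..t, B τ := by
      intro j hj
      have hd : ∀ τ ∈ uIcc (0:ℝ) t,
          HasDerivAt (fun τ : ℝ => iteratedDeriv j f (Q τ))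
            (iteratedDeriv (j+1) f (Q τ) * z) τ := by
        intro τ hτ
        rw [uIcc_of_le ht0] at hτ
        exact HasDerivAt.comp (𝕜 := ℝ) τ (hFd j (Q τ) (hQball τ (hsub hτ))) (hQd τ)
      have hintc : ContinuousOn (fun τ : ℝ => iteratedDeriv (j+1) f (Q τ) * z)
          (Icc (0:ℝ) 1) := by
        apply ContinuousOn.mul ?_ continuousOn_const
        exact (hFc (j+1)).comp hQcont.continuousOn hQball
      have hint : IntervalIntegrable (fun τ : ℝ => iteratedDeriv (j+1) f (Q τ) * z)
          volume 0 t :=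
        (hintc.mono (by rw [uIcc_of_le ht0]; exact hsub)).intervalIntegrable
      have hftc := intervalIntegral.integral_eq_sub_of_hasDerivAt hd hint
      have hQ0 : Q 0 = 0 := by simp [hQdef]
      have heq2 : iteratedDeriv j f (Q t) = iteratedDeriv j f 0 +
          ∫ τ in (0:ℝ)..t, iteratedDeriv (j+1) f (Q τ) * z := by
        rw [hftc, hQ0]; ring
      -- pointwise bound on the integrand norm
      have hptw : ∀ τ ∈ Icc (0:ℝ) t,
          ‖iteratedDeriv (j+1) f (Q τ) * z‖ ≤ B τ := by
        intro τ hτ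
        have hτ1 : τ ∈ Icc (0:ℝ) 1 := hsub hτ
        have h1 : ‖iteratedDeriv (j+1) f (Q τ) * z‖ ≤ ‖iteratedDeriv (j+1) f (Q τ)‖ := by
          rw [norm_mul]
          exact mul_le_of_le_one_right (norm_nonneg _) (le_trans (le_of_eq hrdef.symm) hr1.le)
        have hwτ : ∀ i ∈ Finset.range k, ‖iteratedDeriv i f (Q τ)‖ ≤ w τ := by
          intro i hi
          rw [hwdef]
          simp only
          rw [hPQ τ hτ1]
          exact Finset.single_le_sum (f := fun i => ‖iteratedDeriv i f (Q τ)‖)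
            (fun i _ => norm_nonneg _) hi
        rcases lt_or_eq_of_le (Nat.succ_le_of_lt (Finset.mem_range.mp hj)) with hlt | heqk0
        all_goals try have heqk : j + 1 = k := heqk0
        · refine le_trans h1 (le_trans (hwτ (j+1) (Finset.mem_range.mpr hlt)) ?_)
          rw [hBdef]
          beta_reduce
          exact le_mul_of_one_le_left (hw0 τ) (le_add_of_nonneg_right
            (mul_nonneg hC0 (Real.rpow_nonneg (hbase' τ hτ1).le _)))
        · rw [heqk] at h1 ⊢
          refine le_trans h1 ?_
          have h2 := hkey (Q τ) (hQball τ hτ1)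
          rw [hQabs τ hτ1] at h2
          have h3 : ∑ i ∈ Finset.range k, ‖iteratedDeriv i f (Q τ)‖ = w τ := by
            rw [hwdef]
            simp only
            rw [hPQ τ hτ1]
          rw [h3] at h2
          refine le_trans h2 ?_
          rw [hBdef]
          beta_reduce
          have h4 : 0 ≤ C * (1 - τ * r) ^ (-α) :=
            mul_nonneg hC0 (Real.rpow_nonneg (hbase' τ hτ1).le _)
          nlinarith [hw0 τ]
      calc ‖iteratedDeriv j f (Q t)‖
          ≤ ‖iteratedDeriv j f 0‖ +
            ‖∫ τ in (0:ℝ)..t, iteratedDeriv (j+1) f (Q τ) * z‖ := by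
            rw [heq2]; exact norm_add_le _ _
        _ ≤ ‖iteratedDeriv j f 0‖ +
            ∫ τ in (0:ℝ)..t, ‖iteratedDeriv (j+1) f (Q τ) * z‖ := by
            refine add_le_add_right ?_ _
            exact intervalIntegral.norm_integral_le_integral_norm ht0
        _ ≤ ‖iteratedDeriv j f 0‖ + ∫ τ in (0:ℝ)..t, B τ := by
            refine add_le_add_right ?_ _
            exact intervalIntegral.integral_mono_on ht0 hint.norm hBint hptw
    -- sum over j
    have hwt : w t = ∑ j ∈ Finset.range k, ‖iteratedDeriv j f (Q t)‖ := by
      rw [hwdef]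
      simp only
      rw [hPQ t ⟨ht0, ht1⟩]
    have hw0eq : w 0 = ∑ j ∈ Finset.range k, ‖iteratedDeriv j f 0‖ := by
      have hP0 : P 0 = 0 := by
        rw [hPdef]
        simp [hcdef]
      rw [hwdef]
      beta_reduce
      rw [hP0]
    have hBk : (∫ τ in (0:ℝ)..t, (k:ℝ) * B τ) = ∫ τ in (0:ℝ)..t, g τ * w τ := by
      apply intervalIntegral.integral_congr
      intro τ hτ
      rw [uIcc_of_le ht0] at hτ
      have hτ1 : τ ∈ Icc (0:ℝ) 1 := hsub hτ
      rw [hBdef, hgdef]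
      simp only
      rw [hceq τ hτ1]
      ring
    calc w t = ∑ j ∈ Finset.range k, ‖iteratedDeriv j f (Q t)‖ := hwt
      _ ≤ ∑ j ∈ Finset.range k,
          (‖iteratedDeriv j f 0‖ + ∫ τ in (0:ℝ)..t, B τ) :=
          Finset.sum_le_sum hjineq
      _ = w 0 + (k:ℝ) * ∫ τ in (0:ℝ)..t, B τ := by
          rw [Finset.sum_add_distrib, Finset.sum_const, Finset.card_range, hw0eq,
            nsmul_eq_mul]
      _ = w 0 + ∫ τ in (0:ℝ)..t, (k:ℝ) * B τ := by
          rw [intervalIntegral.integral_const_mul]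
      _ = w 0 + ∫ τ in (0:ℝ)..t, g τ * w τ := by rw [hBk]
  -- Gronwall
  have hgr := my_gronwall hwcont hgcont hg0 hw0 hii 1 ⟨zero_le_one, le_refl 1⟩
  -- bound the integral of g
  have hgint : IntervalIntegrable g volume 0 1 := hgcont.intervalIntegrable 0 1
  set h2 : ℝ → ℝ := fun τ => (k:ℝ) * (1 + C * (1 - τ) ^ (-α)) with hh2def
  have hrpowint : IntervalIntegrable (fun x : ℝ => x ^ (-α)) volume 0 1 :=
    intervalIntegral.intervalIntegrable_rpow' (by linarith)
  have hcompint : IntervalIntegrable (fun τ : ℝ => (1 - τ) ^ (-α)) volume 0 1 := by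
    have := (hrpowint.comp_sub_left 1).symm
    simpa using this
  have hh2int : IntervalIntegrable h2 volume 0 1 := by
    apply IntervalIntegrable.const_mul
    exact (intervalIntegrable_const).add (hcompint.const_mul C)
  have hgh2 : (∫ τ in (0:ℝ)..1, g τ) ≤ ∫ τ in (0:ℝ)..1, h2 τ := by
    apply intervalIntegral.integral_mono_ae_restrict zero_le_one hgint hh2int
    have hnull : volume ({(1:ℝ)} : Set ℝ) = 0 := Real.volume_singleton
    have hmem : ({(1:ℝ)} : Set ℝ)ᶜ ∈ ae volume := compl_mem_ae_iff.mpr hnull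
    have hmem' : ({(1:ℝ)} : Set ℝ)ᶜ ∈ ae (volume.restrict (Icc (0:ℝ) 1)) :=
      Filter.le_def.mp (ae_mono Measure.restrict_le_self) _ hmem
    have hIcc : Icc (0:ℝ) 1 ∈ ae (volume.restrict (Icc (0:ℝ) 1)) :=
      ae_restrict_mem measurableSet_Icc
    filter_upwards [hmem', hIcc] with τ hτ1 hτIcc
    have hτne : τ ≠ 1 := hτ1
    have hτlt : τ < 1 := lt_of_le_of_ne hτIcc.2 hτne
    have hb1 : (0:ℝ) < 1 - τ := by linarith
    have hb2 : 1 - τ ≤ 1 - c τ * r := by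
      have : c τ * r ≤ τ := by
        rw [hceq τ hτIcc]
        exact mul_le_of_le_one_right hτIcc.1 hr1.le
      linarith
    have h5 : (1 - c τ * r) ^ (-α) ≤ (1 - τ) ^ (-α) :=
      Real.rpow_le_rpow_of_nonpos hb1 hb2 (neg_nonpos.mpr hα0)
    rw [hgdef, hh2def]
    simp only
    have : C * (1 - c τ * r) ^ (-α) ≤ C * (1 - τ) ^ (-α) :=
      mul_le_mul_of_nonneg_left h5 hC0
    have hk0 : (0:ℝ) ≤ (k:ℝ) := Nat.cast_nonneg k
    nlinarith
  have hIval : (∫ τ in (0:ℝ)..1, (1 - τ) ^ (-α)) = (1-α)⁻¹ := by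
    have h6 : (∫ τ in (0:ℝ)..1, (1 - τ) ^ (-α)) = ∫ x in (0:ℝ)..1, x ^ (-α) := by
      have := intervalIntegral.integral_comp_sub_left (a := (0:ℝ)) (b := 1)
        (fun x : ℝ => x ^ (-α)) 1
      simpa using this
    rw [h6, integral_rpow (Or.inl (by linarith))]
    rw [Real.one_rpow, Real.zero_rpow (by linarith : -α + 1 ≠ 0)]
    rw [show -α + 1 = 1 - α by ring]
    field_simp
    norm_num
  have hh2val : (∫ τ in (0:ℝ)..1, h2 τ) = (k:ℝ) * (1 + C * (1-α)⁻¹) := by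
    rw [hh2def]
    simp only
    rw [intervalIntegral.integral_const_mul]
    congr 1
    rw [intervalIntegral.integral_add intervalIntegrable_const (hcompint.const_mul C),
      intervalIntegral.integral_const_mul, hIval]
    simp
  -- conclusion
  have hfz : ‖f z‖ ≤ w 1 := by
    have hP1 : P 1 = z := by
      have hc11 : c 1 = 1 := hceq 1 ⟨zero_le_one, le_refl 1⟩
      rw [hPdef]
      beta_reduce
      rw [hc11]
      simp
    have h0mem : 0 ∈ Finset.range k := Finset.mem_range.mpr hk
    have := Finset.single_le_sum (f := fun j => ‖iteratedDeriv j f (P 1)‖)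
      (fun i _ => norm_nonneg _) h0mem
    rw [hwdef]
    simp only
    rw [hP1] at this ⊢
    simpa [iteratedDeriv_zero] using this
  have hw0eq : w 0 = ∑ j ∈ Finset.range k, ‖iteratedDeriv j f 0‖ := by
    have hP0 : P 0 = 0 := by
      rw [hPdef]
      simp [hcdef]
    rw [hwdef]
    beta_reduce
    rw [hP0]
  calc ‖f z‖ ≤ w 1 := hfz
    _ ≤ w 0 * Real.exp (∫ τ in (0:ℝ)..1, g τ) := hgr
    _ ≤ w 0 * Real.exp ((k:ℝ) * (1 + C * (1-α)⁻¹)) := by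
        apply mul_le_mul_of_nonneg_left _ (hw0 0)
        apply Real.exp_le_exp.mpr
        rw [← hh2val]
        exact hgh2
    _ = (∑ j ∈ Finset.range k, ‖iteratedDeriv j f 0‖) *
        Real.exp ((k:ℝ) * (1 + C * (1-α)⁻¹)) := by rw [hw0eq]
end

section
/- Let k ≥ 1 and let n_0 > 1 be real. Let A_0, …, A_{k−1} be analytic on the unit disk D and belong to the Bloch space B, i.e. sup_{z∈D} |A_j'(z)|(1−|z|²) < ∞ for every j = 0, …, k−1. Suppose there exist θ ∈ [0, 2π) and ν ∈ [0,1) such that z_θ = ν e^{iθ} ∈ D satisfies A_j(z_θ) ≠ 0 for some j ∈ {0, …, k−1}. Then every analytic solution f on D of the equation (f^{(k)})^{n_0} + A_{k−1}(z)(f^{(k−1)})^{n_0} + ⋯ + A_1(z)(f')^{n_0} + A_0(z) f^{n_0} = 0 belongs to the Bloch-type space B^s for every s ∈ (0, ∞), i.e. sup_{z∈D} |f'(z)|(1−|z|²)^s < ∞ for every s > 0. -/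
open MeasureTheory Metric Set

lemma coefBound {A : ℂ → ℂ} {M h : ℝ}
    (hA : DifferentiableOn ℂ A (ball (0:ℂ) 1))
    (hB : ∀ z ∈ ball (0:ℂ) 1, ‖deriv A z‖ * (1 - ‖z‖ ^ 2) ≤ M)
    (hh0 : 0 < h) (hh1 : h ≤ 1) :
    ∀ w ∈ ball (0:ℂ) 1,
      ‖A w‖ ≤ ‖A 0‖ + (M / h) * (1 - ‖w‖) ^ (-h) := by
  have hM0 : 0 ≤ M := by
    have h0 := hB 0 (by simp)
    simp at h0
    exact le_trans (norm_nonneg _) h0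
  intro w hw
  set r : ℝ := ‖w‖ with hr
  have hr0 : 0 ≤ r := norm_nonneg w
  have hr1 : r < 1 := by simpa [hr] using mem_ball_zero_iff.1 hw
  have hAa : AnalyticOnNhd ℂ A (ball (0:ℂ) 1) := hA.analyticOnNhd isOpen_ball
  -- membership of segment points
  have hmem : ∀ t : ℝ, t ∈ Icc (0:ℝ) 1 → ((t:ℂ) * w) ∈ ball (0:ℂ) 1 := by
    intro t ht
    rw [mem_ball_zero_iff]
    calc ‖(t:ℂ) * w‖ = |t| * r := by
          simp [map_mul, abs, Complex.norm_real, hr]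
      _ ≤ 1 * r := by
          have : |t| ≤ 1 := abs_le.2 ⟨by linarith [ht.1], ht.2⟩
          exact mul_le_mul_of_nonneg_right this hr0
      _ < 1 := by simpa using hr1
  -- derivative of t ↦ A (t w)
  have hderA : ∀ t : ℝ, t ∈ Icc (0:ℝ) 1 →
      HasDerivAt (fun t : ℝ => A ((t:ℂ) * w)) (w • deriv A ((t:ℂ)*w)) t := by
    intro t ht
    have hc : HasDerivAt (fun t : ℝ => (t:ℂ) * w) w t := by
      simpa using (Complex.ofRealCLM.hasDerivAt (x := t)).mul_const w
    have hd : DifferentiableAt ℂ A ((t:ℂ)*w) :=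
      (hAa _ (hmem t ht)).differentiableAt
    have := HasDerivAt.scomp_of_eq (x := t) hd.hasDerivAt hc rfl
    exact this
  -- continuity of the derivative path
  have hcont : ContinuousOn (fun t : ℝ => w • deriv A ((t:ℂ)*w)) (Icc (0:ℝ) 1) := by
    have h1 : ContinuousOn (deriv A) (ball (0:ℂ) 1) := hAa.deriv.continuousOn
    have h2 : ContinuousOn (fun t : ℝ => (t:ℂ) * w) (Icc (0:ℝ) 1) :=
      (Complex.continuous_ofReal.mul continuous_const).continuousOn
    exact (h1.comp h2 (fun t ht => hmem t ht)).const_smul w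
  -- positivity facts
  have hpos : ∀ t : ℝ, t ∈ Icc (0:ℝ) 1 → 0 < 1 - t * r := by
    intro t ht
    nlinarith [ht.1, ht.2]
  have h1r : 0 < 1 - r := by linarith
  -- FTC
  have hint : IntervalIntegrable (fun t : ℝ => w • deriv A ((t:ℂ)*w)) volume 0 1 := by
    apply ContinuousOn.intervalIntegrable
    rwa [uIcc_of_le zero_le_one]
  have hftc : ∫ t in (0:ℝ)..1, w • deriv A ((t:ℂ)*w) = A w - A 0 := by
    rw [intervalIntegral.integral_eq_sub_of_hasDerivAt
      (fun t ht => hderA t (by rwa [uIcc_of_le zero_le_one] at ht)) hint]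
    norm_num
  -- majorant
  set ψ : ℝ → ℝ := fun t => M * (1 - r) ^ (-h) * (r * (1 - t * r) ^ (h - 1)) with hψ
  have hψcont : ContinuousOn ψ (Icc (0:ℝ) 1) := by
    apply ContinuousOn.mul continuousOn_const
    apply ContinuousOn.mul continuousOn_const
    apply ContinuousOn.rpow_const
    · exact (continuous_const.sub (continuous_id.mul continuous_const)).continuousOn
    · exact fun t ht => Or.inl (ne_of_gt (hpos t ht))
  have hptle : ∀ t ∈ Icc (0:ℝ) 1, ‖w • deriv A ((t:ℂ)*w)‖ ≤ ψ t := by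
    intro t ht
    have htw : ‖(t:ℂ)*w‖ = t * r := by
      simp [map_mul, Complex.norm_real, Real.norm_eq_abs, abs_of_nonneg ht.1, hr]
    have h2 : 1 - t * r ≤ 1 - ‖(t:ℂ)*w‖ ^ 2 := by
      rw [htw]
      have h0tr : 0 ≤ t * r := mul_nonneg ht.1 hr0
      have htr1 : t * r ≤ 1 := by nlinarith [ht.2, hr1.le, hr0, ht.1]
      nlinarith [mul_le_mul_of_nonneg_left htr1 h0tr]
    have h3 : ‖deriv A ((t:ℂ)*w)‖ ≤ M / (1 - t * r) := by
      rw [le_div_iff₀ (hpos t ht)]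
      calc ‖deriv A ((t:ℂ)*w)‖ * (1 - t * r)
          ≤ ‖deriv A ((t:ℂ)*w)‖ * (1 - ‖(t:ℂ)*w‖ ^ 2) :=
            mul_le_mul_of_nonneg_left h2 (norm_nonneg _)
        _ ≤ M := hB _ (hmem t ht)
    have h4 : M / (1 - t * r) = M * ((1 - t*r) ^ (h-1) * (1 - t*r) ^ (-h)) := by
      rw [← Real.rpow_add (hpos t ht)]
      rw [show h - 1 + -h = -1 by ring, Real.rpow_neg_one]
      ring
    have h5 : (1 - t*r) ^ (-h) ≤ (1 - r) ^ (-h) := by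
      apply Real.rpow_le_rpow_of_nonpos h1r (by nlinarith [ht.2, hr0]) (by linarith)
    have h6 : ‖deriv A ((t:ℂ)*w)‖ ≤ M * ((1 - t*r) ^ (h-1) * (1 - r) ^ (-h)) := by
      refine le_trans h3 (le_of_eq_of_le h4 ?_)
      have hx : (0:ℝ) ≤ (1 - t*r) ^ (h-1) := Real.rpow_nonneg (hpos t ht).le _
      exact mul_le_mul_of_nonneg_left (mul_le_mul_of_nonneg_left h5 hx) hM0
    calc ‖w • deriv A ((t:ℂ)*w)‖ = r * ‖deriv A ((t:ℂ)*w)‖ := by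
          rw [norm_smul]
      _ ≤ r * (M * ((1 - t*r) ^ (h-1) * (1 - r) ^ (-h))) :=
          mul_le_mul_of_nonneg_left h6 hr0
      _ = ψ t := by rw [hψ]; ring
  -- compute the integral of the majorant
  have hintcont : ContinuousOn (fun t : ℝ => r * (1 - t * r) ^ (h - 1)) (Icc (0:ℝ) 1) := by
    apply ContinuousOn.mul continuousOn_const
    apply ContinuousOn.rpow_const
    · exact (continuous_const.sub (continuous_id.mul continuous_const)).continuousOn
    · exact fun t ht => Or.inl (ne_of_gt (hpos t ht))
  have hintval : ∫ t in (0:ℝ)..1, r * (1 - t * r) ^ (h - 1)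
      = (1 - (1 - r) ^ h) / h := by
    have hF : ∀ t ∈ uIcc (0:ℝ) 1,
        HasDerivAt (fun t : ℝ => (1 - (1 - t * r) ^ h) / h) (r * (1 - t * r) ^ (h - 1)) t := by
      intro t ht
      rw [uIcc_of_le zero_le_one] at ht
      have hinner : HasDerivAt (fun t : ℝ => 1 - t * r) (-r) t := by
        simpa using (hasDerivAt_mul_const r (x := t)).const_sub 1
      have houter := Real.hasDerivAt_rpow_const (x := 1 - t * r) (p := h)
        (Or.inl (ne_of_gt (hpos t ht)))
      have hq := houter.comp t hinner
      have := (hq.const_sub 1).div_const h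
      refine this.congr_deriv ?_
      rw [div_eq_iff hh0.ne']
      ring
    rw [intervalIntegral.integral_eq_sub_of_hasDerivAt hF
      (by apply ContinuousOn.intervalIntegrable; rwa [uIcc_of_le zero_le_one])]
    norm_num
  -- put everything together
  have hABnd : ‖A w - A 0‖ ≤ M * (1 - r) ^ (-h) * ((1 - (1 - r) ^ h) / h) := by
    rw [← hftc]
    calc ‖∫ t in (0:ℝ)..1, w • deriv A ((t:ℂ)*w)‖
        ≤ ∫ t in (0:ℝ)..1, ‖w • deriv A ((t:ℂ)*w)‖ :=
          intervalIntegral.norm_integral_le_integral_norm zero_le_one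
      _ ≤ ∫ t in (0:ℝ)..1, ψ t := by
          apply intervalIntegral.integral_mono_on zero_le_one
          · apply ContinuousOn.intervalIntegrable
            rw [uIcc_of_le zero_le_one]; exact hcont.norm
          · apply ContinuousOn.intervalIntegrable
            rwa [uIcc_of_le zero_le_one]
          · exact hptle
      _ = M * (1 - r) ^ (-h) * ∫ t in (0:ℝ)..1, r * (1 - t * r) ^ (h - 1) := by
          rw [hψ, intervalIntegral.integral_const_mul]
      _ = M * (1 - r) ^ (-h) * ((1 - (1 - r) ^ h) / h) := by rw [hintval]
  have htri : ‖A w‖ ≤ ‖A 0‖ + ‖A w - A 0‖ := by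
    calc ‖A w‖ = ‖A 0 + (A w - A 0)‖ := by ring_nf
      _ ≤ _ := norm_add_le _ _
  refine le_trans htri (by
    have e1 : (0:ℝ) ≤ (1 - r) ^ (-h) := Real.rpow_nonneg h1r.le _
    have e2 : (0:ℝ) ≤ (1 - r) ^ h := Real.rpow_nonneg h1r.le _
    have key2 : (1 - (1 - r) ^ h) / h ≤ 1 / h := by
      exact (div_le_div_iff_of_pos_right hh0).2 (by linarith)
    have key : M * (1 - r) ^ (-h) * ((1 - (1 - r) ^ h) / h)
        ≤ M * (1 - r) ^ (-h) * (1 / h) :=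
      mul_le_mul_of_nonneg_left key2 (mul_nonneg hM0 e1)
    have : M * (1 - r) ^ (-h) * (1 / h) = M / h * (1 - r) ^ (-h) := by ring
    linarith)

lemma gronwallAux {E : Type*} [NormedAddCommGroup E] [NormedSpace ℝ E]
    {g : ℝ → E} {g' : ℝ → E} {c1 c2 : ℝ} (hc1 : 1 ≤ c1) (hc2 : 0 ≤ c2)
    (hg : ∀ t ∈ Icc (0:ℝ) 1, HasDerivAt g (g' t) t)
    (hbound : ∀ t ∈ Ico (0:ℝ) 1,
      ‖g' t‖ ≤ (c1 + c2 * (1-t) ^ (-(1/2):ℝ)) * ‖g t‖) :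
    ‖g 1‖ ≤ (‖g 0‖ + 1) * Real.exp (c1 + 1 + 2*c2) := by
  set B : ℝ → ℝ := fun t => (‖g 0‖ + 1) * Real.exp ((c1+1)*t + 2*c2*(1 - (1-t) ^ ((1/2):ℝ)))
    with hBdef
  set B' : ℝ → ℝ := fun t => B t * ((c1+1) + c2 * (1-t) ^ (-(1/2):ℝ)) with hB'def
  have hBpos : ∀ t, 0 < B t := by
    intro t
    apply mul_pos (by positivity) (Real.exp_pos _)
  have hBcont : ContinuousOn B (Icc (0:ℝ) 1) := by
    apply ContinuousOn.mul continuousOn_const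
    apply Real.continuous_exp.comp_continuousOn
    apply ContinuousOn.add ((continuous_const.mul continuous_id).continuousOn)
    apply ContinuousOn.mul continuousOn_const
    apply ContinuousOn.sub continuousOn_const
    apply ContinuousOn.rpow_const ((continuous_const.sub continuous_id).continuousOn)
    exact fun t _ => Or.inr (by norm_num)
  have hB' : ∀ t ∈ Ico (0:ℝ) 1, HasDerivWithinAt B (B' t) (Ici t) t := by
    intro t ht
    have hpos : (0:ℝ) < 1 - t := by linarith [ht.2]
    have hinner : HasDerivAt (fun t : ℝ => 1 - t) (-1) t := by
      simpa using (hasDerivAt_id t).const_sub 1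
    have houter := Real.hasDerivAt_rpow_const (x := 1 - t) (p := (1/2:ℝ))
      (Or.inl (ne_of_gt hpos))
    have hq := houter.comp t hinner
    have hE : HasDerivAt (fun t : ℝ => (c1+1)*t + 2*c2*(1 - (1-t) ^ ((1/2):ℝ)))
        ((c1+1) + c2 * (1-t) ^ (-(1/2):ℝ)) t := by
      have h2 := ((hq.const_sub 1).const_mul (2*c2))
      have h3 := (hasDerivAt_mul_const (c1+1) (x := t)).add h2
      have hexp : (1-t) ^ ((1/2:ℝ) - 1) = (1-t) ^ (-(1/2):ℝ) := by norm_num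
      have he : (c1+1) + c2 * (1-t) ^ (-(1/2):ℝ)
          = (c1+1) + 2*c2 * -(1/2 * (1-t) ^ ((1/2:ℝ) - 1) * -1) := by
        rw [hexp]; ring
      rw [he]
      refine h3.congr_of_eventuallyEq (Filter.Eventually.of_forall fun x => ?_)
      simp only [Pi.add_apply, Function.comp_apply]
      ring
    have : HasDerivAt B (B' t) t := by
      have := (hE.exp.const_mul (‖g 0‖ + 1))
      rw [hB'def, hBdef]
      simpa [mul_comm, mul_assoc, mul_left_comm] using this
    exact this.hasDerivWithinAt
  have hg0 : ‖g 0‖ ≤ B 0 := by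
    have hB0 : B 0 = ‖g 0‖ + 1 := by
      rw [hBdef]; norm_num [Real.one_rpow]
    rw [hB0]; linarith [norm_nonneg (g 0)]
  have hmain := image_norm_le_of_norm_deriv_right_lt_deriv_boundary'
    (f := g) (f' := g') (a := 0) (b := 1)
    (fun t ht => (hg t ht).continuousAt.continuousWithinAt)
    (fun t ht => (hg t (Ico_subset_Icc_self ht)).hasDerivWithinAt)
    hg0 hBcont hB'
    (fun t ht hgt => by
      have h1 : ‖g' t‖ ≤ (c1 + c2 * (1-t) ^ (-(1/2):ℝ)) * B t := by
        rw [← hgt]; exact hbound t ht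
      have h2 : (c1 + c2 * (1-t) ^ (-(1/2):ℝ)) * B t < B' t := by
        rw [hB'def]
        have : (0:ℝ) ≤ c2 * (1-t) ^ (-(1/2):ℝ) :=
          mul_nonneg hc2 (Real.rpow_nonneg (by linarith [ht.2]) _)
        nlinarith [hBpos t]
      exact lt_of_le_of_lt h1 h2)
  have h1mem : (1:ℝ) ∈ Icc (0:ℝ) 1 := by norm_num
  have := hmain h1mem
  calc ‖g 1‖ ≤ B 1 := this
    _ = (‖g 0‖ + 1) * Real.exp (c1 + 1 + 2*c2) := by
        rw [hBdef]
        norm_num [Real.zero_rpow]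

lemma eqBound {k : ℕ} {n0 : ℝ} (hn0 : 1 < n0) {A : ℕ → ℂ → ℂ} {f : ℂ → ℂ} {z : ℂ}
    (heqz : (iteratedDeriv k f z) ^ ((n0 : ℝ) : ℂ) +
      ∑ j ∈ Finset.range k, A j z * (iteratedDeriv j f z) ^ ((n0 : ℝ) : ℂ) = 0)
    {N : ℝ} (hN : 0 ≤ N) (hb : ∀ j < k, ‖iteratedDeriv j f z‖ ≤ N) :
    ‖iteratedDeriv k f z‖
      ≤ (1 + ∑ j ∈ Finset.range k, ‖A j z‖) * N := by
  set S := ∑ j ∈ Finset.range k, ‖A j z‖ with hSdef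
  have hS0 : 0 ≤ S := Finset.sum_nonneg fun j _ => norm_nonneg _
  have hn0pos : (0:ℝ) < n0 := by linarith
  have heq2 : (iteratedDeriv k f z) ^ ((n0 : ℝ) : ℂ)
      = -∑ j ∈ Finset.range k, A j z * (iteratedDeriv j f z) ^ ((n0 : ℝ) : ℂ) := by
    linear_combination heqz
  have habs : ‖iteratedDeriv k f z‖ ^ n0 ≤ S * N ^ n0 := by
    calc ‖iteratedDeriv k f z‖ ^ n0
        = ‖(iteratedDeriv k f z) ^ ((n0 : ℝ) : ℂ)‖ :=
          (Complex.norm_cpow_real _ _).symm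
      _ = ‖∑ j ∈ Finset.range k, A j z * (iteratedDeriv j f z) ^ ((n0:ℝ):ℂ)‖ := by
          rw [heq2, norm_neg]
      _ ≤ ∑ j ∈ Finset.range k,
            ‖A j z * (iteratedDeriv j f z) ^ ((n0:ℝ):ℂ)‖ :=
          norm_sum_le _ _
      _ ≤ ∑ j ∈ Finset.range k, ‖A j z‖ * N ^ n0 := by
          apply Finset.sum_le_sum
          intro j hj
          rw [norm_mul, Complex.norm_cpow_real]
          exact mul_le_mul_of_nonneg_left
            (Real.rpow_le_rpow (norm_nonneg _)
              (hb j (Finset.mem_range.1 hj)) hn0pos.le) (norm_nonneg _)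
      _ = S * N ^ n0 := by rw [hSdef, Finset.sum_mul]
  have h1 : S * N ^ n0 ≤ ((1 + S) * N) ^ n0 := by
    rw [Real.mul_rpow (by linarith) hN]
    have h2 : S ≤ (1 + S) ^ n0 := by
      have := Real.rpow_le_rpow_of_exponent_le (x := 1 + S) (by linarith) hn0.le
      rw [Real.rpow_one] at this
      linarith
    exact mul_le_mul_of_nonneg_right h2 (Real.rpow_nonneg hN _)
  exact (Real.rpow_le_rpow_iff (norm_nonneg _)
    (mul_nonneg (by linarith) hN) hn0pos).1 (le_trans habs h1)

set_option maxHeartbeats 2000000 in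
theorem stmt6 (k : ℕ) (hk : 1 ≤ k) (n0 : ℝ) (hn0 : 1 < n0)
    (A : ℕ → ℂ → ℂ) (hA : ∀ j < k, DifferentiableOn ℂ (A j) (ball (0:ℂ) 1))
    (hABloch : ∀ j < k, ∃ M : ℝ, ∀ z ∈ ball (0:ℂ) 1,
      ‖deriv (A j) z‖ * (1 - ‖z‖ ^ 2) ≤ M)
    (hzθ : ∃ θ ∈ Set.Ico (0:ℝ) (2 * Real.pi), ∃ ν ∈ Set.Ico (0:ℝ) 1, ∃ j < k,
      A j ((ν : ℂ) * Complex.exp ((θ : ℂ) * Complex.I)) ≠ 0) :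
    ∀ f : ℂ → ℂ, DifferentiableOn ℂ f (ball (0:ℂ) 1) →
      (∀ z ∈ ball (0:ℂ) 1,
        (iteratedDeriv k f z) ^ ((n0 : ℝ) : ℂ) +
          ∑ j ∈ Finset.range k, A j z * (iteratedDeriv j f z) ^ ((n0 : ℝ) : ℂ) = 0) →
      ∀ s : ℝ, 0 < s →
        ∃ M : ℝ, ∀ z ∈ ball (0:ℂ) 1,
          ‖deriv f z‖ * (1 - ‖z‖ ^ 2) ^ s ≤ M := by
  intro f hf heq s hs
  -- analyticity of iterated derivatives
  have hfa : ∀ j, AnalyticOnNhd ℂ (iteratedDeriv j f) (ball (0:ℂ) 1) := by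
    intro j
    induction j with
    | zero => simpa [iteratedDeriv_zero] using hf.analyticOnNhd isOpen_ball
    | succ n ih => rw [iteratedDeriv_succ]; exact ih.deriv
  have hdjf : ∀ (j : ℕ), ∀ w ∈ ball (0:ℂ) 1,
      HasDerivAt (iteratedDeriv j f) (iteratedDeriv (j+1) f w) w := by
    intro j w hw
    have h1 := ((hfa j) w hw).differentiableAt.hasDerivAt
    rwa [← iteratedDeriv_succ] at h1
  -- coefficient constants
  set α : ℕ → ℝ := fun j => ‖A j 0‖ with hα
  set Mc : ℕ → ℝ := fun j => if hj : j < k then (hABloch j hj).choose else 0 with hMcdef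
  have hMc : ∀ j, j < k → ∀ z ∈ ball (0:ℂ) 1,
      ‖deriv (A j) z‖ * (1 - ‖z‖ ^ 2) ≤ Mc j := by
    intro j hj
    simpa [hMcdef, dif_pos hj] using (hABloch j hj).choose_spec
  have hMc0 : ∀ j, 0 ≤ Mc j := by
    intro j
    by_cases hj : j < k
    · have := hMc j hj 0 (by simp)
      simp at this
      exact le_trans (norm_nonneg _) this
    · simp [hMcdef, dif_neg hj]
  have hcoef : ∀ h : ℝ, 0 < h → h ≤ 1 → ∀ j, j < k → ∀ w ∈ ball (0:ℂ) 1,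
      ‖A j w‖ ≤ α j + (Mc j / h) * (1 - ‖w‖) ^ (-h) :=
    fun h h0 h1 j hj => coefBound (hA j hj) (hMc j hj) h0 h1
  set c1 : ℝ := 1 + ∑ j ∈ Finset.range k, α j with hc1def
  set c2 : ℝ := ∑ j ∈ Finset.range k, 2 * Mc j with hc2def
  set c3 : ℝ := ∑ j ∈ Finset.range k, Mc j with hc3def
  have hc1 : 1 ≤ c1 := by
    rw [hc1def]
    have : (0:ℝ) ≤ ∑ j ∈ Finset.range k, α j :=
      Finset.sum_nonneg fun j _ => norm_nonneg _
    linarith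
  have hc2 : 0 ≤ c2 := Finset.sum_nonneg fun j _ => by linarith [hMc0 j]
  have hc3 : 0 ≤ c3 := Finset.sum_nonneg fun j _ => hMc0 j
  set N0 : ℝ := ‖(fun j : Fin k => iteratedDeriv (j:ℕ) f 0)‖ with hN0def
  have hN00 : 0 ≤ N0 := norm_nonneg _
  set Bmax : ℝ := (N0 + 1) * Real.exp (c1 + 1 + 2*c2) with hBmaxdef
  have hBmax0 : 0 ≤ Bmax := by positivity
  -- uniform bound on derivatives of order < k
  have hunif : ∀ z ∈ ball (0:ℂ) 1, ∀ j, j < k →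
      ‖iteratedDeriv j f z‖ ≤ Bmax := by
    intro z hz
    have hr1 : ‖z‖ < 1 := by
      simpa using mem_ball_zero_iff.1 hz
    have hr0 : 0 ≤ ‖z‖ := norm_nonneg z
    have hmem : ∀ t : ℝ, t ∈ Icc (0:ℝ) 1 → ((t:ℂ) * z) ∈ ball (0:ℂ) 1 := by
      intro t ht
      rw [mem_ball_zero_iff, norm_mul, Complex.norm_real, Real.norm_eq_abs]
      calc |t| * ‖z‖ ≤ 1 * ‖z‖ :=
            mul_le_mul_of_nonneg_right (abs_le.2 ⟨by linarith [ht.1], ht.2⟩) hr0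
        _ < 1 := by simpa using hr1
    have habs_tz : ∀ t : ℝ, t ∈ Icc (0:ℝ) 1 → ‖(t:ℂ)*z‖ ≤ t := by
      intro t ht
      rw [norm_mul, Complex.norm_real, Real.norm_eq_abs, abs_of_nonneg ht.1]
      nlinarith [ht.1, hr1.le, hr0]
    set g : ℝ → (Fin k → ℂ) := fun t j => iteratedDeriv (j:ℕ) f ((t:ℂ)*z) with hgdef
    set g' : ℝ → (Fin k → ℂ) := fun t j => z * iteratedDeriv ((j:ℕ)+1) f ((t:ℂ)*z) with hg'def
    have hg : ∀ t ∈ Icc (0:ℝ) 1, HasDerivAt g (g' t) t := by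
      intro t ht
      rw [hasDerivAt_pi]
      intro j
      have hc : HasDerivAt (fun t : ℝ => (t:ℂ) * z) z t := by
        simpa using (Complex.ofRealCLM.hasDerivAt (x := t)).mul_const z
      have hd := hdjf (j:ℕ) _ (hmem t ht)
      have := HasDerivAt.scomp_of_eq (x := t) hd hc rfl
      exact this
    have hcomp : ∀ t : ℝ, ∀ j, j < k → ‖iteratedDeriv j f ((t:ℂ)*z)‖ ≤ ‖g t‖ := by
      intro t j hj
      have := norm_le_pi_norm (g t) ⟨j, hj⟩
      simpa [hgdef] using this
    have hbound : ∀ t ∈ Ico (0:ℝ) 1,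
        ‖g' t‖ ≤ (c1 + c2 * (1-t) ^ (-(1/2):ℝ)) * ‖g t‖ := by
      intro t ht
      have ht' : t ∈ Icc (0:ℝ) 1 := ⟨ht.1, ht.2.le⟩
      have hpos : (0:ℝ) < 1 - t := by linarith [ht.2]
      have hrp : (0:ℝ) ≤ (1-t) ^ (-(1/2):ℝ) := Real.rpow_nonneg hpos.le _
      have hK1 : (1:ℝ) ≤ c1 + c2 * (1-t) ^ (-(1/2):ℝ) := by nlinarith
      rw [pi_norm_le_iff_of_nonneg (mul_nonneg (by linarith) (norm_nonneg _))]
      intro j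
      have hcomp1 : ‖g' t j‖ ≤ ‖iteratedDeriv ((j:ℕ)+1) f ((t:ℂ)*z)‖ := by
        rw [hg'def]
        simp only [norm_mul]
        calc ‖z‖ * ‖iteratedDeriv ((j:ℕ)+1) f ((t:ℂ)*z)‖
            ≤ 1 * ‖iteratedDeriv ((j:ℕ)+1) f ((t:ℂ)*z)‖ :=
              mul_le_mul_of_nonneg_right hr1.le (norm_nonneg _)
          _ = _ := one_mul _
      rcases lt_or_eq_of_le (Nat.succ_le_of_lt j.isLt) with hlt | heqk
      · -- j+1 < k
        refine le_trans hcomp1 (le_trans (hcomp t _ hlt) ?_)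
        nlinarith [norm_nonneg (g t)]
      · -- j+1 = k
        have hSb : (∑ i ∈ Finset.range k, ‖A i ((t:ℂ)*z)‖)
            ≤ (c1 - 1) + c2 * (1-t) ^ (-(1/2):ℝ) := by
          have hstep : ∀ i ∈ Finset.range k,
              ‖A i ((t:ℂ)*z)‖ ≤ α i + 2 * Mc i * (1-t) ^ (-(1/2):ℝ) := by
            intro i hi
            have hik := Finset.mem_range.1 hi
            have h1 := hcoef (1/2) (by norm_num) (by norm_num) i hik _ (hmem t ht')
            have h2 : (1 - ‖(t:ℂ)*z‖) ^ (-(1/2):ℝ) ≤ (1-t) ^ (-(1/2):ℝ) := by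
              apply Real.rpow_le_rpow_of_nonpos hpos ?_ (by norm_num)
              have := habs_tz t ht'
              linarith
            have h3 : Mc i / (1/2) = 2 * Mc i := by ring
            calc ‖A i ((t:ℂ)*z)‖
                ≤ α i + (Mc i / (1/2)) * (1 - ‖(t:ℂ)*z‖) ^ (-(1/2):ℝ) := h1
              _ ≤ α i + 2 * Mc i * (1-t) ^ (-(1/2):ℝ) := by
                  rw [h3]
                  have : 2 * Mc i * (1 - ‖(t:ℂ)*z‖) ^ (-(1/2):ℝ)
                      ≤ 2 * Mc i * (1-t) ^ (-(1/2):ℝ) :=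
                    mul_le_mul_of_nonneg_left h2 (by linarith [hMc0 i])
                  linarith
          calc (∑ i ∈ Finset.range k, ‖A i ((t:ℂ)*z)‖)
              ≤ ∑ i ∈ Finset.range k, (α i + 2 * Mc i * (1-t) ^ (-(1/2):ℝ)) :=
                Finset.sum_le_sum hstep
            _ = (∑ i ∈ Finset.range k, α i)
                + (∑ i ∈ Finset.range k, 2 * Mc i) * (1-t) ^ (-(1/2):ℝ) := by
                rw [Finset.sum_add_distrib, Finset.sum_mul]
            _ = (c1 - 1) + c2 * (1-t) ^ (-(1/2):ℝ) := by
                rw [hc1def, hc2def]; ring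
        have hfk := eqBound (k := k) hn0 (heq _ (hmem t ht')) (norm_nonneg (g t))
          (fun i hik => hcomp t i hik)
        refine le_trans hcomp1 ?_
        have heqk' : (↑j : ℕ) + 1 = k := heqk
        rw [heqk']
        refine le_trans hfk ?_
        apply mul_le_mul_of_nonneg_right ?_ (norm_nonneg (g t))
        linarith
    have hG := gronwallAux hc1 hc2 hg hbound
    have hg0 : g 0 = fun j : Fin k => iteratedDeriv (j:ℕ) f 0 := by
      funext j
      simp [hgdef]
    have hg1 : g 1 = fun j : Fin k => iteratedDeriv (j:ℕ) f z := by
      funext j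
      simp [hgdef]
    intro j hj
    calc ‖iteratedDeriv j f z‖ = ‖(g 1) ⟨j, hj⟩‖ := by
          rw [hg1]
      _ ≤ ‖g 1‖ := norm_le_pi_norm _ _
      _ ≤ (‖g 0‖ + 1) * Real.exp (c1 + 1 + 2*c2) := hG
      _ = Bmax := by rw [hBmaxdef, hg0, hN0def]
  -- final step
  set h : ℝ := min s (1/2) with hhdef
  have hh0 : 0 < h := lt_min hs (by norm_num)
  have hh1 : h ≤ 1 := le_trans (min_le_right _ _) (by norm_num)
  have hhs : h ≤ s := min_le_left _ _
  refine ⟨Bmax * (c1 + (c3/h) * 2 ^ s), ?_⟩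
  intro z hz
  have hr1 : ‖z‖ < 1 := by
    simpa using mem_ball_zero_iff.1 hz
  have hr0 : 0 ≤ ‖z‖ := norm_nonneg z
  set r : ℝ := ‖z‖ with hrdef
  have h1r : 0 < 1 - r := by linarith
  have h1r2 : 0 < 1 - r^2 := by nlinarith
  -- coefficient sum bound at z with exponent h
  have hS : (∑ j ∈ Finset.range k, ‖A j z‖)
      ≤ (c1 - 1) + (c3/h) * (1-r) ^ (-h) := by
    have hstep : ∀ i ∈ Finset.range k,
        ‖A i z‖ ≤ α i + (Mc i / h) * (1-r) ^ (-h) :=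
      fun i hi => hcoef h hh0 hh1 i (Finset.mem_range.1 hi) z hz
    calc (∑ j ∈ Finset.range k, ‖A j z‖)
        ≤ ∑ i ∈ Finset.range k, (α i + (Mc i / h) * (1-r) ^ (-h)) :=
          Finset.sum_le_sum hstep
      _ = (∑ i ∈ Finset.range k, α i)
          + (∑ i ∈ Finset.range k, Mc i) / h * (1-r) ^ (-h) := by
          rw [Finset.sum_add_distrib, ← Finset.sum_mul, ← Finset.sum_div]
      _ = (c1 - 1) + (c3/h) * (1-r) ^ (-h) := by
          rw [hc1def, hc3def]; ring
  have hfk : ‖iteratedDeriv k f z‖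
      ≤ (1 + ∑ j ∈ Finset.range k, ‖A j z‖) * Bmax :=
    eqBound (k := k) hn0 (heq z hz) hBmax0 (fun i hik => hunif z hz i hik)
  have hrp : (0:ℝ) ≤ (1-r) ^ (-h) := Real.rpow_nonneg h1r.le _
  have hrp1 : (1:ℝ) ≤ c1 + (c3/h) * (1-r) ^ (-h) := by
    have : 0 ≤ (c3/h) * (1-r) ^ (-h) := mul_nonneg (by positivity) hrp
    linarith
  have hf1 : ‖deriv f z‖ ≤ (c1 + (c3/h) * (1-r) ^ (-h)) * Bmax := by
    have hder1 : deriv f z = iteratedDeriv 1 f z := by rw [iteratedDeriv_one]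
    rcases lt_or_eq_of_le hk with hk1 | hk1
    · -- 1 < k
      rw [hder1]
      refine le_trans (hunif z hz 1 hk1) ?_
      nlinarith
    · -- k = 1
      rw [hder1, hk1]
      refine le_trans hfk ?_
      apply mul_le_mul_of_nonneg_right ?_ hBmax0
      linarith
  -- power factor bounds
  have e1 : (1 - r^2) ^ s ≤ 1 := Real.rpow_le_one (by nlinarith) (by nlinarith) hs.le
  have e2 : (1-r) ^ (-h) * (1 - r^2) ^ s ≤ 2 ^ s := by
    have hsplit : (1 - r^2) ^ s = (1-r) ^ s * (1+r) ^ s := by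
      rw [← Real.mul_rpow h1r.le (by linarith)]
      ring_nf
    rw [hsplit]
    calc (1-r) ^ (-h) * ((1-r) ^ s * (1+r) ^ s)
        ≤ (1-r) ^ (-h) * ((1-r) ^ s * 2 ^ s) := by
          apply mul_le_mul_of_nonneg_left ?_ hrp
          apply mul_le_mul_of_nonneg_left ?_ (Real.rpow_nonneg h1r.le _)
          exact Real.rpow_le_rpow (by linarith) (by linarith) hs.le
      _ = (1-r) ^ (s - h) * 2 ^ s := by
          rw [← mul_assoc, ← Real.rpow_add h1r]
          ring_nf
      _ ≤ 1 * 2 ^ s := by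
          apply mul_le_mul_of_nonneg_right ?_ (Real.rpow_nonneg (by norm_num) _)
          exact Real.rpow_le_one h1r.le (by linarith) (by linarith)
      _ = 2 ^ s := one_mul _
  have hfinal : (c1 + (c3/h) * (1-r) ^ (-h)) * (1 - r^2) ^ s
      ≤ c1 + (c3/h) * 2 ^ s := by
    have hrs0 : 0 ≤ (1 - r^2) ^ s := Real.rpow_nonneg (by nlinarith) _
    have hc30 : (0:ℝ) ≤ c3 / h := by positivity
    calc (c1 + (c3/h) * (1-r) ^ (-h)) * (1 - r^2) ^ s
        = c1 * (1 - r^2) ^ s + (c3/h) * ((1-r) ^ (-h) * (1 - r^2) ^ s) := by ring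
      _ ≤ c1 * 1 + (c3/h) * 2 ^ s := by
          have t1 : c1 * (1 - r^2) ^ s ≤ c1 * 1 :=
            mul_le_mul_of_nonneg_left e1 (by linarith)
          have t2 : (c3/h) * ((1-r) ^ (-h) * (1 - r^2) ^ s) ≤ (c3/h) * 2 ^ s :=
            mul_le_mul_of_nonneg_left e2 hc30
          exact add_le_add t1 t2
      _ = c1 + (c3/h) * 2 ^ s := by ring
  have hrs0 : 0 ≤ (1 - r^2) ^ s := Real.rpow_nonneg (by nlinarith) _
  calc ‖deriv f z‖ * (1 - ‖z‖ ^ 2) ^ s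
      ≤ ((c1 + (c3/h) * (1-r) ^ (-h)) * Bmax) * (1 - r^2) ^ s := by
        rw [← hrdef]
        exact mul_le_mul_of_nonneg_right hf1 hrs0
    _ = Bmax * ((c1 + (c3/h) * (1-r) ^ (-h)) * (1 - r^2) ^ s) := by ring
    _ ≤ Bmax * (c1 + (c3/h) * 2 ^ s) := mul_le_mul_of_nonneg_left hfinal hBmax0
end

section
/- Let k ≥ 1 and 1 ≤ j ≤ k. Let v : [0,1) → ℂ be k times continuously differentiable. Then for all x ∈ [0,1): |v^{(k−j)}(x)|² ≤ 2^j Σ_{m=1}^j |v^{(k−m)}(0)|² x^{j−m}/(j−m)! + 2^j ∫_0^x ( (x−s)^{j−1}/(j−1)! ) |v^{(k)}(s)|² ds. -/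
open MeasureTheory Set intervalIntegral
open scoped Nat



lemma iterDeriv_comp {f : ℝ → ℂ} {s : Set ℝ} (hs : UniqueDiffOn ℝ s) (i : ℕ) :
    ∀ m : ℕ, ∀ x ∈ s, iteratedDerivWithin m (iteratedDerivWithin i f s) s x
      = iteratedDerivWithin (i + m) f s x := by
  intro m
  induction m with
  | zero => intro x hx; simp
  | succ m ih =>
    intro x hx
    rw [iteratedDerivWithin_succ,
      derivWithin_congr (fun y hy => ih y hy) (ih x hx),
      ← iteratedDerivWithin_succ]
    rfl

lemma contDiffOn_iterDeriv {f : ℝ → ℂ} {s : Set ℝ} (hs : UniqueDiffOn ℝ s) :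
    ∀ i m : ℕ, ContDiffOn ℝ (↑(i + m)) f s →
      ContDiffOn ℝ (↑m) (iteratedDerivWithin i f s) s := by
  intro i
  induction i with
  | zero => intro m h; simpa using h
  | succ i ih =>
    intro m h
    have h1 : ContDiffOn ℝ (↑(m+1)) (iteratedDerivWithin i f s) s := by
      refine ih (m+1) ?_
      convert h using 2
      omega
    have h2 := h1.derivWithin (m := (m : ℕ∞)) hs (by norm_cast)
    exact h2.congr fun x hx => by rw [iteratedDerivWithin_succ]

lemma sq_sum_add_le : ∀ (n : ℕ) (a : ℕ → ℝ) (R : ℝ),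
    (∑ i ∈ Finset.range n, a i + R)^2 ≤
      ∑ i ∈ Finset.range n, 2^(i+1) * (a i)^2 + 2^n * R^2 := by
  intro n
  induction n with
  | zero => intro a R; simp
  | succ n ih =>
    intro a R
    rw [Finset.sum_range_succ' a, Finset.sum_range_succ' (fun i => 2^(i+1) * (a i)^2)]
    have h1 := ih (fun i => a (i+1)) R
    have h2 : ∑ i ∈ Finset.range n, (2:ℝ)^(i+1+1) * (a (i+1))^2
        = 2 * ∑ i ∈ Finset.range n, (2:ℝ)^(i+1) * (a (i+1))^2 := by
      rw [Finset.mul_sum]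
      exact Finset.sum_congr rfl fun i _ => by ring
    have h3 : (2:ℝ)^(n+1) = 2 * 2^n := by ring
    have h4 : (2:ℝ)^(0+1) = 2 := by norm_num
    nlinarith [sq_nonneg (∑ i ∈ Finset.range n, a (i+1) + R - a 0)]

lemma iterDeriv_Icc_eq {g : ℝ → ℂ} {x : ℝ} (hx1 : x < 1) (i : ℕ) {t : ℝ}
    (ht : t ∈ Ico 0 x) :
    iteratedDerivWithin i g (Icc 0 x) t = iteratedDerivWithin i g (Ico 0 1) t := by
  have hset : Ico (0:ℝ) 1 ∩ Iic x = Icc 0 x := by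
    ext y
    simp only [mem_inter_iff, mem_Ico, mem_Iic, mem_Icc]
    constructor
    · rintro ⟨⟨h1, _⟩, h3⟩; exact ⟨h1, h3⟩
    · rintro ⟨h1, h2⟩; exact ⟨⟨h1, lt_of_le_of_lt h2 hx1⟩, h2⟩
  have hnhds : Iic x ∈ nhds t := Iic_mem_nhds ht.2
  rw [← hset, iteratedDerivWithin_eq_iteratedFDerivWithin,
    iteratedDerivWithin_eq_iteratedFDerivWithin, iteratedFDerivWithin_inter hnhds]

lemma interval_CS {x : ℝ} (hx : 0 < x) {w h : ℝ → ℝ}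
    (hw : ContinuousOn w (Icc 0 x)) (hh : ContinuousOn h (Icc 0 x))
    (hw0 : ∀ t ∈ Icc (0:ℝ) x, 0 ≤ w t) (hWpos : 0 < ∫ t in (0:ℝ)..x, w t) :
    (∫ t in (0:ℝ)..x, w t * h t)^2 ≤
      (∫ t in (0:ℝ)..x, w t) * ∫ t in (0:ℝ)..x, w t * (h t)^2 := by
  have huIcc : uIcc (0:ℝ) x = Icc 0 x := uIcc_of_le hx.le
  have hiw : IntervalIntegrable w volume 0 x := (huIcc ▸ hw).intervalIntegrable
  have hiwh : IntervalIntegrable (fun t => w t * h t) volume 0 x :=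
    (huIcc ▸ (hw.mul hh)).intervalIntegrable
  have hiwh2 : IntervalIntegrable (fun t => w t * (h t)^2) volume 0 x :=
    (huIcc ▸ (hw.mul (hh.pow 2))).intervalIntegrable
  set C := ∫ t in (0:ℝ)..x, w t with hC
  set B := ∫ t in (0:ℝ)..x, w t * h t with hB
  set A := ∫ t in (0:ℝ)..x, w t * (h t)^2 with hA
  set c : ℝ := B / C with hc
  have key : 0 ≤ A - 2*c*B + c^2 * C := by
    have heq : A - 2*c*B + c^2 * C = ∫ t in (0:ℝ)..x, w t * (h t - c)^2 := by
      have : (fun t => w t * (h t - c)^2)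
          = fun t => (fun t => w t * (h t)^2) t - (2*c) * ((fun t => w t * h t) t)
            + c^2 * ((fun t => w t) t) := by
        funext t; ring
      rw [this, intervalIntegral.integral_add ((hiwh2.sub (hiwh.const_mul _)))
          (hiw.const_mul _), intervalIntegral.integral_sub hiwh2 (hiwh.const_mul _),
        intervalIntegral.integral_const_mul, intervalIntegral.integral_const_mul]
    rw [heq]
    apply intervalIntegral.integral_nonneg hx.le
    intro t ht
    exact mul_nonneg (hw0 t ht) (sq_nonneg _)
  have expand : (A - 2*c*B + c^2*C)*C = A*C - B^2 := by
    rw [hc]; field_simp; ring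
  nlinarith [mul_nonneg key hWpos.le]

lemma taylor_integral {f : ℝ → ℂ} {x : ℝ} (hx : 0 < x) (n : ℕ)
    (hf : ContDiffOn ℝ (↑(n+1)) f (Icc 0 x)) :
    f x = taylorWithinEval f n (Icc 0 x) 0 x +
      ∫ t in (0:ℝ)..x, ((n ! : ℝ)⁻¹ * (x - t)^n) •
        iteratedDerivWithin (n+1) f (Icc 0 x) t := by
  have hud : UniqueDiffOn ℝ (Icc (0:ℝ) x) := uniqueDiffOn_Icc hx
  have hfn : ContDiffOn ℝ (↑n) f (Icc 0 x) := hf.of_le (by exact_mod_cast Nat.le_succ n)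
  have hcont : ContinuousOn (fun t => taylorWithinEval f n (Icc 0 x) t x) (Icc 0 x) :=
    continuousOn_taylorWithinEval hud hfn
  have hdiff : DifferentiableOn ℝ (iteratedDerivWithin n f (Icc 0 x)) (Ioo 0 x) :=
    (hf.differentiableOn_iteratedDerivWithin (by exact_mod_cast Nat.lt_succ_self n) hud).mono
      Ioo_subset_Icc_self
  have hderiv : ∀ t ∈ Ioo (0:ℝ) x,
      HasDerivWithinAt (fun y => taylorWithinEval f n (Icc 0 x) y x)
        (((n ! : ℝ)⁻¹ * (x - t)^n) • iteratedDerivWithin (n+1) f (Icc 0 x) t) (Ioi t) t :=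
    fun t ht => (taylorWithinEval_hasDerivAt_Ioo x hx ht hfn hdiff).hasDerivWithinAt
  have hint : IntervalIntegrable
      (fun t => ((n ! : ℝ)⁻¹ * (x - t)^n) • iteratedDerivWithin (n+1) f (Icc 0 x) t)
      volume 0 x := by
    apply ContinuousOn.intervalIntegrable
    rw [uIcc_of_le hx.le]
    exact (continuousOn_const.mul ((continuousOn_const.sub continuousOn_id).pow n)).smul
      (hf.continuousOn_iteratedDerivWithin (le_refl _) hud)
  have hFTC := integral_eq_sub_of_hasDeriv_right_of_le hx.le hcont hderiv hint
  rw [taylorWithinEval_self] at hFTC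
  rw [hFTC]
  abel


theorem stmt9 (k j : ℕ) (hk : 1 ≤ k) (hj1 : 1 ≤ j) (hjk : j ≤ k)
    (v : ℝ → ℂ) (hv : ContDiffOn ℝ k v (Set.Ico (0:ℝ) 1)) :
    ∀ x ∈ Set.Ico (0:ℝ) 1,
      ‖iteratedDerivWithin (k - j) v (Set.Ico (0:ℝ) 1) x‖ ^ 2 ≤
        (2:ℝ) ^ j * (∑ m ∈ Finset.Icc 1 j,
          ‖iteratedDerivWithin (k - m) v (Set.Ico (0:ℝ) 1) 0‖ ^ 2 *
            (x ^ (j - m) / ((j - m).factorial : ℝ))) +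
        (2:ℝ) ^ j * ∫ s in (0:ℝ)..x,
          ((x - s) ^ (j - 1) / ((j - 1).factorial : ℝ)) *
            ‖iteratedDerivWithin k v (Set.Ico (0:ℝ) 1) s‖ ^ 2 := by
  intro x hx
  obtain ⟨hx0, hx1⟩ := hx
  have hS : UniqueDiffOn ℝ (Set.Ico (0:ℝ) 1) := uniqueDiffOn_Ico 0 1
  obtain ⟨n, rfl⟩ : ∃ n, j = n + 1 := ⟨j - 1, by omega⟩
  have hjn : n + 1 - 1 = n := by omega
  rw [hjn]
  rcases hx0.eq_or_lt with heq | hpos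
  · -- x = 0 case
    subst heq
    rw [intervalIntegral.integral_same, mul_zero, add_zero]
    have hnonneg : ∀ m ∈ Finset.Icc 1 (n+1),
        (0:ℝ) ≤ ‖iteratedDerivWithin (k - m) v (Set.Ico (0:ℝ) 1) 0‖ ^ 2 *
          ((0:ℝ) ^ (n + 1 - m) / ((n + 1 - m).factorial : ℝ)) := by
      intro m _; positivity
    have h1 := Finset.single_le_sum hnonneg (by simp : n + 1 ∈ Finset.Icc 1 (n+1))
    simp only [Nat.sub_self, pow_zero, Nat.factorial_zero, Nat.cast_one, div_one,
      mul_one] at h1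
    calc ‖iteratedDerivWithin (k - (n+1)) v (Set.Ico (0:ℝ) 1) 0‖ ^ 2
        ≤ ∑ m ∈ Finset.Icc 1 (n+1),
            ‖iteratedDerivWithin (k - m) v (Set.Ico (0:ℝ) 1) 0‖ ^ 2 *
              ((0:ℝ) ^ (n + 1 - m) / ((n + 1 - m).factorial : ℝ)) := h1
      _ ≤ (2:ℝ) ^ (n+1) * ∑ m ∈ Finset.Icc 1 (n+1),
            ‖iteratedDerivWithin (k - m) v (Set.Ico (0:ℝ) 1) 0‖ ^ 2 *
              ((0:ℝ) ^ (n + 1 - m) / ((n + 1 - m).factorial : ℝ)) := by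
          apply le_mul_of_one_le_left (Finset.sum_nonneg hnonneg)
          exact one_le_pow₀ (by norm_num)
  · -- 0 < x case
    set S : Set ℝ := Set.Ico (0:ℝ) 1 with hSdef
    set f := iteratedDerivWithin (k - (n+1)) v S with hfdef
    set H := iteratedDerivWithin k v S with hHdef
    have h0S : (0:ℝ) ∈ S := ⟨le_refl 0, one_pos⟩
    have hsub : Icc (0:ℝ) x ⊆ S := fun t ht => ⟨ht.1, lt_of_le_of_lt ht.2 hx1⟩
    have hkk : k - (n+1) + (n+1) = k := Nat.sub_add_cancel hjk
    have hfC : ContDiffOn ℝ (↑(n+1)) f (Icc 0 x) := by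
      refine (contDiffOn_iterDeriv hS (k - (n+1)) (n+1) ?_).mono hsub
      rw [hkk]; exact hv
    have htay := taylor_integral hpos n hfC
    rw [taylor_within_apply] at htay
    -- coefficients
    set c : ℕ → ℂ := fun i => iteratedDerivWithin (k - (n+1) + i) v S 0 with hcdef
    have hcoef : ∀ i, iteratedDerivWithin i f (Icc 0 x) 0 = c i := by
      intro i
      rw [iterDeriv_Icc_eq hx1 i ⟨le_refl 0, hpos⟩]
      exact iterDeriv_comp hS (k - (n+1)) i 0 h0S
    -- integrand
    have hHcont : ContinuousOn H (Icc 0 x) :=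
      (hv.continuousOn_iteratedDerivWithin (le_refl _) hS).mono hsub
    have hIcongr : (∫ t in (0:ℝ)..x, ((n ! : ℝ)⁻¹ * (x - t)^n) •
          iteratedDerivWithin (n+1) f (Icc 0 x) t)
        = ∫ t in (0:ℝ)..x, ((n ! : ℝ)⁻¹ * (x - t)^n) • H t := by
      apply intervalIntegral.integral_congr_ae
      have hae : ∀ᵐ (t : ℝ), t ≠ x := by
        rw [MeasureTheory.ae_iff]
        refine measure_mono_null (fun t ht => ?_) (Real.volume_singleton (a := x))
        simpa using ht
      filter_upwards [hae] with t htne htI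
      have htmem : t ∈ Ico (0:ℝ) x := by
        rw [uIoc_of_le hpos.le] at htI
        exact ⟨htI.1.le, lt_of_le_of_ne htI.2 htne⟩
      congr 1
      rw [iterDeriv_Icc_eq hx1 (n+1) htmem]
      rw [iterDeriv_comp hS (k - (n+1)) (n+1) t ⟨htmem.1, htmem.2.trans hx1⟩, hkk]
    rw [hIcongr] at htay
    -- the norm bound
    set a : ℕ → ℝ := fun i => (i ! : ℝ)⁻¹ * x ^ i * ‖c i‖ with hadef
    set R : ℝ := ∫ t in (0:ℝ)..x, (n ! : ℝ)⁻¹ * (x - t)^n * ‖H t‖ with hRdef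
    have hnorm1 : ‖f x‖ ≤ ∑ i ∈ Finset.range (n+1), a i + R := by
      rw [htay]
      refine (norm_add_le _ _).trans (add_le_add ?_ ?_)
      · refine (norm_sum_le _ _).trans (le_of_eq (Finset.sum_congr rfl fun i _ => ?_))
        rw [hcoef i, norm_smul, Real.norm_eq_abs, sub_zero,
          abs_of_nonneg (by positivity)]
      · refine (intervalIntegral.norm_integral_le_integral_norm hpos.le).trans (le_of_eq ?_)
        apply intervalIntegral.integral_congr
        intro t ht
        rw [uIcc_of_le hpos.le] at ht
        simp only [norm_smul, Real.norm_eq_abs]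
        rw [abs_of_nonneg (mul_nonneg (by positivity) (pow_nonneg (sub_nonneg.2 ht.2) n))]
    -- term bounds
    have hA2 : ∀ i ∈ Finset.range (n+1),
        (2:ℝ)^(i+1) * (a i)^2 ≤ 2^(n+1) * (‖c i‖^2 * (x^i / (i ! : ℝ))) := by
      intro i hi
      simp only [Finset.mem_range] at hi
      have hfac1 : (1:ℝ) ≤ (i ! : ℝ) := by exact_mod_cast Nat.factorial_pos i
      have hinv1 : ((i ! : ℝ))⁻¹ ≤ 1 := inv_le_one_of_one_le₀ hfac1
      have hinvnn : (0:ℝ) ≤ ((i ! : ℝ))⁻¹ := by positivity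
      have hxp1 : x ^ i ≤ 1 := pow_le_one₀ hx0 hx1.le
      have hxpnn : (0:ℝ) ≤ x ^ i := pow_nonneg hx0 i
      have h2 : (2:ℝ)^(i+1) ≤ 2^(n+1) := pow_le_pow_right₀ one_le_two (by omega)
      have key : (a i)^2 ≤ ‖c i‖^2 * (x^i / (i ! : ℝ)) := by
        rw [hadef]
        simp only [div_eq_mul_inv]
        set u : ℝ := x ^ i * ((i ! : ℝ))⁻¹ with hu
        have hu0 : 0 ≤ u := mul_nonneg hxpnn hinvnn
        have hu1 : u ≤ 1 := mul_le_one₀ hxp1 hinvnn hinv1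
        have : ((i ! : ℝ))⁻¹ * x ^ i * ‖c i‖ = u * ‖c i‖ := by rw [hu]; ring
        rw [this]
        nlinarith [mul_nonneg (mul_nonneg hu0 (sub_nonneg.2 hu1)) (sq_nonneg ‖c i‖)]
      calc (2:ℝ)^(i+1) * (a i)^2 ≤ (2:ℝ)^(n+1) * (a i)^2 :=
            mul_le_mul_of_nonneg_right h2 (sq_nonneg _)
        _ ≤ 2^(n+1) * (‖c i‖^2 * (x^i / (i ! : ℝ))) :=
            mul_le_mul_of_nonneg_left key (by positivity)
    -- reindex the sum
    have hsum : ∑ i ∈ Finset.range (n+1), ‖c i‖^2 * (x^i / (i ! : ℝ))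
        = ∑ m ∈ Finset.Icc 1 (n+1), ‖iteratedDerivWithin (k - m) v S 0‖^2 *
            (x ^ (n + 1 - m) / ((n + 1 - m).factorial : ℝ)) := by
      refine Finset.sum_nbij' (fun i => n + 1 - i) (fun m => n + 1 - m)
        (fun i hi => ?_) (fun m hm => ?_) (fun i hi => ?_) (fun m hm => ?_) (fun i hi => ?_)
      · simp only [Finset.mem_range] at hi; simp only [Finset.mem_Icc]; omega
      · simp only [Finset.mem_Icc] at hm; simp only [Finset.mem_range]; omega
      · simp only [Finset.mem_range] at hi
        show n + 1 - (n + 1 - i) = i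
        omega
      · simp only [Finset.mem_Icc] at hm
        show n + 1 - (n + 1 - m) = m
        omega
      · simp only [Finset.mem_range] at hi
        have e1 : k - (n + 1 - i) = k - (n+1) + i := by omega
        have e2 : n + 1 - (n + 1 - i) = i := by omega
        rw [e1, e2, hcdef]
    -- remainder bound
    have hwcont : ContinuousOn (fun t => (n ! : ℝ)⁻¹ * (x - t)^n) (Icc 0 x) :=
      continuousOn_const.mul ((continuousOn_const.sub continuousOn_id).pow n)
    have hw0 : ∀ t ∈ Icc (0:ℝ) x, 0 ≤ (n ! : ℝ)⁻¹ * (x - t)^n :=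
      fun t ht => mul_nonneg (by positivity) (pow_nonneg (sub_nonneg.2 ht.2) n)
    have hWval : ∫ t in (0:ℝ)..x, (n ! : ℝ)⁻¹ * (x - t)^n
        = (n ! : ℝ)⁻¹ * (x^(n+1)/(n+1)) := by
      rw [intervalIntegral.integral_const_mul]
      congr 1
      have h := intervalIntegral.integral_comp_sub_left (a := (0:ℝ)) (b := x)
        (fun u : ℝ => u ^ n) x
      simp only [sub_zero, sub_self] at h
      rw [h, integral_pow]
      simp
    have hWpos : 0 < ∫ t in (0:ℝ)..x, (n ! : ℝ)⁻¹ * (x - t)^n := by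
      rw [hWval]; positivity
    have hWle : (∫ t in (0:ℝ)..x, (n ! : ℝ)⁻¹ * (x - t)^n) ≤ 1 := by
      rw [hWval]
      have h1 : x^(n+1) ≤ 1 := pow_le_one₀ hx0 hx1.le
      have h2 : (1:ℝ) ≤ (n ! : ℝ) := by exact_mod_cast Nat.factorial_pos n
      have h3 : x^(n+1)/((n:ℝ)+1) ≤ 1 := by
        rw [div_le_one (by positivity)]
        calc x^(n+1) ≤ 1 := h1
          _ ≤ (n:ℝ)+1 := by norm_num
      exact mul_le_one₀ (inv_le_one_of_one_le₀ h2) (by positivity) h3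
    have hCS := interval_CS hpos hwcont hHcont.norm hw0 hWpos
    have hR2 : R^2 ≤ ∫ s in (0:ℝ)..x, (x - s)^n / (n ! : ℝ) * ‖H s‖^2 := by
      have heq : (∫ s in (0:ℝ)..x, (x - s)^n / (n ! : ℝ) * ‖H s‖^2)
          = ∫ t in (0:ℝ)..x, ((n ! : ℝ)⁻¹ * (x - t)^n) * ‖H t‖^2 := by
        apply intervalIntegral.integral_congr
        intro t _
        simp only [div_eq_inv_mul]
      rw [heq]
      calc R^2 ≤ (∫ t in (0:ℝ)..x, (n ! : ℝ)⁻¹ * (x - t)^n) *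
            ∫ t in (0:ℝ)..x, ((n ! : ℝ)⁻¹ * (x - t)^n) * ‖H t‖^2 := hCS
        _ ≤ 1 * ∫ t in (0:ℝ)..x, ((n ! : ℝ)⁻¹ * (x - t)^n) * ‖H t‖^2 := by
            apply mul_le_mul_of_nonneg_right hWle
            apply intervalIntegral.integral_nonneg hpos.le
            intro t ht
            exact mul_nonneg (hw0 t ht) (sq_nonneg _)
        _ = _ := one_mul _
    -- final assembly
    calc ‖f x‖^2 ≤ (∑ i ∈ Finset.range (n+1), a i + R)^2 :=
          pow_le_pow_left₀ (norm_nonneg _) hnorm1 2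
      _ ≤ ∑ i ∈ Finset.range (n+1), 2^(i+1) * (a i)^2 + 2^(n+1) * R^2 :=
          sq_sum_add_le (n+1) a R
      _ ≤ 2^(n+1) * (∑ m ∈ Finset.Icc 1 (n+1), ‖iteratedDerivWithin (k - m) v S 0‖^2 *
            (x ^ (n + 1 - m) / ((n + 1 - m).factorial : ℝ))) +
          2^(n+1) * ∫ s in (0:ℝ)..x, (x - s)^n / (n ! : ℝ) * ‖H s‖^2 := by
          apply add_le_add
          · calc ∑ i ∈ Finset.range (n+1), (2:ℝ)^(i+1) * (a i)^2
                ≤ ∑ i ∈ Finset.range (n+1), 2^(n+1) * (‖c i‖^2 * (x^i / (i ! : ℝ))) :=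
                  Finset.sum_le_sum hA2
              _ = 2^(n+1) * ∑ i ∈ Finset.range (n+1), ‖c i‖^2 * (x^i / (i ! : ℝ)) :=
                  (Finset.mul_sum _ _ _).symm
              _ = _ := by rw [hsum]
          · exact mul_le_mul_of_nonneg_left hR2 (by positivity)
end

section
/- Let k ≥ 1, let x_0 ∈ (0,1), and let B_0, …, B_{k−1} : [0,1) → [0,∞) be nonnegative functions that are bounded on [0, x_0]. Define R(x,s) = Σ_{j=1}^k (x−s)^{j−1} B_{k−j}(x)/(j−1)! for 0 ≤ s ≤ x ≤ x_0. Suppose w : [0, x_0] → ℝ is a bounded measurable function satisfying w(x) ≤ ∫_0^x R(x,s) w(s) ds for all x ∈ [0, x_0]. Then w(x) ≤ 0 for all x ∈ [0, x_0]. -/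
open MeasureTheory Set

theorem stmt10 (k : ℕ) (hk : 1 ≤ k) (x0 : ℝ) (hx0 : x0 ∈ Set.Ioo (0:ℝ) 1)
    (B : ℕ → ℝ → ℝ)
    (hBnonneg : ∀ j < k, ∀ x ∈ Set.Ico (0:ℝ) 1, 0 ≤ B j x)
    (hBbdd : ∀ j < k, ∃ M : ℝ, ∀ x ∈ Set.Icc (0:ℝ) x0, B j x ≤ M)
    (R : ℝ → ℝ → ℝ)
    (hR : ∀ x s : ℝ, 0 ≤ s → s ≤ x → x ≤ x0 →
      R x s = ∑ j ∈ Finset.Icc 1 k, (x - s) ^ (j - 1) * B (k - j) x / ((j - 1).factorial : ℝ))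
    (w : ℝ → ℝ) (hwmeas : Measurable w) (hwbdd : ∃ M : ℝ, ∀ x ∈ Set.Icc (0:ℝ) x0, |w x| ≤ M)
    (hineq : ∀ x ∈ Set.Icc (0:ℝ) x0, w x ≤ ∫ s in (0:ℝ)..x, R x s * w s) :
    ∀ x ∈ Set.Icc (0:ℝ) x0, w x ≤ 0 := by
  classical
  obtain ⟨Mw, hMw⟩ := hwbdd
  set M : ℝ := max Mw 0 with hMdef
  have hM0 : 0 ≤ M := le_max_right _ _
  have hMw' : ∀ x ∈ Set.Icc (0:ℝ) x0, |w x| ≤ M :=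
    fun x hx => (hMw x hx).trans (le_max_left _ _)
  -- uniform bound on the B's
  set Mf : ℕ → ℝ := fun j => if h : j < k then max ((hBbdd j h).choose) 0 else 0 with hMfdef
  set MB : ℝ := ∑ j ∈ Finset.range k, Mf j with hMBdef
  have hMf0 : ∀ j, 0 ≤ Mf j := by
    intro j
    by_cases h : j < k <;> simp [hMfdef, h, le_max_right]
  have hMB0 : 0 ≤ MB := Finset.sum_nonneg fun j _ => hMf0 j
  have hBle : ∀ j (hj : j < k), ∀ x ∈ Set.Icc (0:ℝ) x0, B j x ≤ MB := by
    intro j hj x hx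
    have h1 : B j x ≤ Mf j := by
      simp only [hMfdef]
      rw [dif_pos hj]
      exact le_max_of_le_left ((hBbdd j hj).choose_spec x hx)
    exact h1.trans (Finset.single_le_sum (fun i _ => hMf0 i) (Finset.mem_range.2 hj))
  set C : ℝ := (k : ℝ) * MB with hCdef
  have hC0 : 0 ≤ C := mul_nonneg (Nat.cast_nonneg _) hMB0
  -- pointwise bounds on R
  have hx01 : x0 < 1 := hx0.2
  have hRbound : ∀ x ∈ Set.Icc (0:ℝ) x0, ∀ s, 0 ≤ s → s ≤ x → 0 ≤ R x s ∧ R x s ≤ C := by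
    intro x hx s hs hsx
    rw [hR x s hs hsx hx.2]
    constructor
    · apply Finset.sum_nonneg
      intro j hj
      have hjk : j ≤ k := (Finset.mem_Icc.1 hj).2
      have hj1 : 1 ≤ j := (Finset.mem_Icc.1 hj).1
      have hBx : 0 ≤ B (k - j) x :=
        hBnonneg (k - j) (by omega) x ⟨hx.1, hx.2.trans_lt hx01⟩
      exact div_nonneg (mul_nonneg (pow_nonneg (by linarith) _) hBx) (Nat.cast_nonneg _)
    · have hcard : (Finset.Icc 1 k).card = k := by simp
      calc ∑ j ∈ Finset.Icc 1 k, (x - s) ^ (j - 1) * B (k - j) x / ((j - 1).factorial : ℝ)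
          ≤ ∑ j ∈ Finset.Icc 1 k, MB := by
            apply Finset.sum_le_sum
            intro j hj
            have hjk : j ≤ k := (Finset.mem_Icc.1 hj).2
            have hj1 : 1 ≤ j := (Finset.mem_Icc.1 hj).1
            have hxs0 : 0 ≤ x - s := by linarith
            have hxs1 : x - s ≤ 1 := by
              have : x ≤ x0 := hx.2
              linarith [hx0.2, hs]
            have hpow : (x - s) ^ (j - 1) ≤ 1 := pow_le_one₀ hxs0 hxs1
            have hBx0 : 0 ≤ B (k - j) x := by
              apply hBnonneg (k - j) (by omega) x ⟨hx.1, hx.2.trans_lt hx01⟩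
            have hBxM : B (k - j) x ≤ MB := hBle (k - j) (by omega) x hx
            have hfac : (1:ℝ) ≤ ((j - 1).factorial : ℝ) := by
              exact_mod_cast Nat.one_le_iff_ne_zero.2 (Nat.factorial_ne_zero _)
            calc (x - s) ^ (j - 1) * B (k - j) x / ((j - 1).factorial : ℝ)
                ≤ (x - s) ^ (j - 1) * B (k - j) x :=
                  div_le_self (mul_nonneg (pow_nonneg hxs0 _) hBx0) hfac
              _ ≤ 1 * MB := mul_le_mul hpow hBxM hBx0 zero_le_one
              _ = MB := one_mul MB
        _ = C := by rw [Finset.sum_const, hcard, hCdef, nsmul_eq_mul]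
  -- key induction
  have key : ∀ m : ℕ, ∀ x ∈ Set.Icc (0:ℝ) x0, w x ≤ M * C ^ m * x ^ m / (m.factorial : ℝ) := by
    intro m
    induction m with
    | zero =>
      intro x hx
      simpa using (le_abs_self (w x)).trans (hMw' x hx)
    | succ m ih =>
      intro x hx
      have hx0x : (0:ℝ) ≤ x := hx.1
      set D : ℝ := M * C ^ m / (m.factorial : ℝ) with hDdef
      have hD0 : 0 ≤ D := by positivity
      -- measurable version of the integrand
      set g : ℝ → ℝ := fun s =>
        (∑ j ∈ Finset.Icc 1 k, (x - s) ^ (j - 1) * B (k - j) x / ((j - 1).factorial : ℝ)) * w s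
        with hgdef
      have hgmeas : Measurable g := by
        apply Measurable.mul _ hwmeas
        apply Finset.measurable_sum
        intro j hj
        fun_prop
      have heq : ∀ s ∈ Set.Ioc (0:ℝ) x, R x s * w s = g s := by
        intro s hs
        rw [hgdef]
        simp only
        rw [hR x s hs.1.le hs.2 hx.2]
      have hgbdd : ∀ s ∈ Set.Ioc (0:ℝ) x, ‖g s‖ ≤ C * M := by
        intro s hs
        rw [← heq s hs]
        have hsI : s ∈ Set.Icc (0:ℝ) x0 := ⟨hs.1.le, hs.2.trans hx.2⟩
        obtain ⟨hR0, hRC⟩ := hRbound x hx s hs.1.le hs.2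
        rw [Real.norm_eq_abs, abs_mul]
        have : |R x s| = R x s := abs_of_nonneg hR0
        rw [this]
        exact mul_le_mul hRC (hMw' s hsI) (abs_nonneg _) hC0
      have hgint : IntegrableOn g (Set.Ioc 0 x) volume := by
        apply Integrable.mono' (integrableOn_const (C := C * M) measure_Ioc_lt_top.ne)
          hgmeas.aestronglyMeasurable
        exact (ae_restrict_iff' measurableSet_Ioc).2 (Filter.Eventually.of_forall hgbdd)
      have hfint : IntegrableOn (fun s => R x s * w s) (Set.Ioc 0 x) volume :=
        hgint.congr_fun (fun s hs => (heq s hs).symm) measurableSet_Ioc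
      have hbint : IntegrableOn (fun s => C * (D * s ^ m)) (Set.Ioc 0 x) volume :=
        (continuous_const.mul (continuous_const.mul (continuous_pow m))).integrableOn_Ioc
      have hle : ∀ s ∈ Set.Ioc (0:ℝ) x, R x s * w s ≤ C * (D * s ^ m) := by
        intro s hs
        have hsI : s ∈ Set.Icc (0:ℝ) x0 := ⟨hs.1.le, hs.2.trans hx.2⟩
        obtain ⟨hR0, hRC⟩ := hRbound x hx s hs.1.le hs.2
        have hws : w s ≤ D * s ^ m := by
          have := ih s hsI
          rw [hDdef]; calc w s ≤ M * C ^ m * s ^ m / (m.factorial : ℝ) := this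
            _ = M * C ^ m / (m.factorial : ℝ) * s ^ m := by ring
        have hb0 : 0 ≤ D * s ^ m := mul_nonneg hD0 (pow_nonneg hs.1.le m)
        calc R x s * w s ≤ R x s * (D * s ^ m) := mul_le_mul_of_nonneg_left hws hR0
          _ ≤ C * (D * s ^ m) := mul_le_mul_of_nonneg_right hRC hb0
      calc w x ≤ ∫ s in (0:ℝ)..x, R x s * w s := hineq x hx
        _ = ∫ s in Set.Ioc (0:ℝ) x, R x s * w s := intervalIntegral.integral_of_le hx0x
        _ ≤ ∫ s in Set.Ioc (0:ℝ) x, C * (D * s ^ m) :=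
            setIntegral_mono_on hfint hbint measurableSet_Ioc hle
        _ = ∫ s in (0:ℝ)..x, C * (D * s ^ m) := (intervalIntegral.integral_of_le hx0x).symm
        _ = C * D * (x ^ (m + 1) / (m + 1)) := by
            simp only [← mul_assoc]
            rw [intervalIntegral.integral_const_mul, integral_pow]
            ring
        _ = M * C ^ (m + 1) * x ^ (m + 1) / ((m + 1).factorial : ℝ) := by
            rw [hDdef, Nat.factorial_succ]
            have h1 : ((m.factorial : ℝ)) ≠ 0 := Nat.cast_ne_zero.2 (Nat.factorial_ne_zero m)
            have h2 : ((m:ℝ) + 1) ≠ 0 := by positivity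
            push_cast
            field_simp
            ring
  -- pass to the limit
  intro x hx
  have hx0x : (0:ℝ) ≤ x := hx.1
  have hlim : Filter.Tendsto (fun m : ℕ => M * C ^ m * x ^ m / (m.factorial : ℝ))
      Filter.atTop (nhds 0) := by
    have h1 : Filter.Tendsto (fun m : ℕ => (C * x) ^ m / (m.factorial : ℝ))
        Filter.atTop (nhds 0) := FloorSemiring.tendsto_pow_div_factorial_atTop (C * x)
    have h2 := h1.const_mul M
    rw [mul_zero] at h2
    convert h2 using 2 with m
    rw [mul_pow]
    ring
  exact ge_of_tendsto' hlim (fun m => key m x hx)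
end

section
/- Let k ≥ 1 and let n_0 > 1 be real. Let A_0, …, A_{k−1} be analytic on the unit disk D and belong to the Bloch space B, i.e. sup_{z∈D} |A_j'(z)|(1−|z|²) < ∞ for every j = 0, …, k−1. Suppose there exist θ ∈ [0, 2π) and ν ∈ [0,1) such that z_θ = ν e^{iθ} ∈ D satisfies A_j(z_θ) ≠ 0 for some j ∈ {0, …, k−1}, and let f be an analytic solution on D of (f^{(k)})^{n_0} + A_{k−1}(z)(f^{(k−1)})^{n_0} + ⋯ + A_1(z)(f')^{n_0} + A_0(z) f^{n_0} = 0. Then there exists a constant C > 0 such that for all r with max(ν, (e−1)/(e+1)) ≤ r < 1: |f'(re^{iθ})|^{n_0} ≤ C · log(1/(1−r)). -/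
open MeasureTheory Metric Set

private lemma rpow_le_one_add {x p : ℝ} (hx : 0 ≤ x) (hp0 : 0 < p) (hp1 : p ≤ 1) :
    x ^ p ≤ 1 + x := by
  rcases le_or_gt x 1 with h | h
  · have := Real.rpow_le_one hx h hp0.le
    linarith
  · have h1 : x ^ p ≤ x ^ (1:ℝ) := Real.rpow_le_rpow_of_exponent_le h.le hp1
    rw [Real.rpow_one] at h1
    linarith

private lemma gronwall_aux {a b r : ℝ} (hr0 : 0 ≤ r) (hsub : Icc 0 r ⊆ Ioo a b)
    {u w : ℝ → ℝ} (hu : ContinuousOn u (Ioo a b)) (hw : ContinuousOn w (Ioo a b))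
    (hw0 : ∀ t ∈ Icc 0 r, 0 ≤ w t)
    (hineq : ∀ s ∈ Icc 0 r, u s ≤ u 0 + ∫ t in (0:ℝ)..s, w t * u t) :
    u r ≤ u 0 * Real.exp (∫ t in (0:ℝ)..r, w t) := by
  set ψ : ℝ → ℝ := fun t => w t * u t with hψdef
  have hψ : ContinuousOn ψ (Ioo a b) := hw.mul hu
  set v : ℝ → ℝ := fun s => u 0 + ∫ t in (0:ℝ)..s, ψ t with hvdef
  set W : ℝ → ℝ := fun s => ∫ t in (0:ℝ)..s, w t with hWdef
  have hIccIoo : ∀ s ∈ Icc 0 r, Icc (0:ℝ) s ⊆ Ioo a b := by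
    intro s hs
    exact fun x hx => hsub ⟨hx.1, hx.2.trans hs.2⟩
  have hint : ∀ (g : ℝ → ℝ), ContinuousOn g (Ioo a b) → ∀ s ∈ Icc 0 r,
      IntervalIntegrable g volume 0 s := by
    intro g hg s hs
    apply ContinuousOn.intervalIntegrable
    rw [Set.uIcc_of_le hs.1]
    exact hg.mono (hIccIoo s hs)
  have hvd : ∀ s ∈ Icc 0 r, HasDerivAt v (ψ s) s := by
    intro s hs
    exact (intervalIntegral.integral_hasDerivAt_right (hint ψ hψ s hs)
      (hψ.stronglyMeasurableAtFilter isOpen_Ioo s (hsub hs))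
      (hψ.continuousAt (isOpen_Ioo.mem_nhds (hsub hs)))).const_add (u 0)
  have hWd : ∀ s ∈ Icc 0 r, HasDerivAt W (w s) s := by
    intro s hs
    exact intervalIntegral.integral_hasDerivAt_right (hint w hw s hs)
      (hw.stronglyMeasurableAtFilter isOpen_Ioo s (hsub hs))
      (hw.continuousAt (isOpen_Ioo.mem_nhds (hsub hs)))
  set φ : ℝ → ℝ := fun s => v s * Real.exp (-W s) with hφdef
  have hφd : ∀ s ∈ Icc 0 r, HasDerivAt φ ((ψ s - w s * v s) * Real.exp (-W s)) s := by
    intro s hs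
    have h1 : HasDerivAt (fun s => Real.exp (-W s)) (-w s * Real.exp (-W s)) s := by
      have := ((hWd s hs).neg).exp
      simpa [mul_comm] using this
    have := (hvd s hs).mul h1
    exact this.congr_deriv (by ring)
  have hφanti : AntitoneOn φ (Icc 0 r) := by
    apply antitoneOn_of_deriv_nonpos (convex_Icc 0 r)
    · exact fun s hs => ((hφd s hs).continuousAt).continuousWithinAt
    · intro s hs
      rw [interior_Icc] at hs
      exact ((hφd s (Ioo_subset_Icc_self hs)).differentiableAt).differentiableWithinAt
    · intro s hs
      rw [interior_Icc] at hs
      have hs' : s ∈ Icc 0 r := Ioo_subset_Icc_self hs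
      rw [(hφd s hs').deriv]
      have h1 : u s ≤ v s := hineq s hs'
      have h2 : ψ s ≤ w s * v s := mul_le_mul_of_nonneg_left h1 (hw0 s hs')
      have h3 : (0:ℝ) < Real.exp (-W s) := Real.exp_pos _
      nlinarith
  have hφr : φ r ≤ φ 0 := hφanti (left_mem_Icc.2 hr0) (right_mem_Icc.2 hr0) hr0
  have hφ0 : φ 0 = u 0 := by
    simp [hφdef, hvdef, hWdef]
  rw [hφ0] at hφr
  have hvr : v r ≤ u 0 * Real.exp (W r) := by
    have h5 : v r * Real.exp (-W r) * Real.exp (W r) ≤ u 0 * Real.exp (W r) :=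
      mul_le_mul_of_nonneg_right hφr (Real.exp_nonneg _)
    rwa [mul_assoc, ← Real.exp_add, neg_add_cancel, Real.exp_zero, mul_one] at h5
  exact (hineq r (right_mem_Icc.2 hr0)).trans hvr

private lemma norm_le_add_integral {φ φ' : ℝ → ℂ} {s : ℝ} (hs : 0 ≤ s)
    (hd : ∀ t ∈ Icc 0 s, HasDerivAt φ (φ' t) t)
    (hc : ContinuousOn φ' (Icc 0 s)) :
    ‖φ s‖ ≤ ‖φ 0‖ + ∫ t in (0:ℝ)..s, ‖φ' t‖ := by
  have hicc : Set.uIcc (0:ℝ) s = Icc 0 s := Set.uIcc_of_le hs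
  have hint : IntervalIntegrable φ' volume 0 s := by
    apply ContinuousOn.intervalIntegrable; rwa [hicc]
  have heq : ∫ t in (0:ℝ)..s, φ' t = φ s - φ 0 := by
    apply intervalIntegral.integral_eq_sub_of_hasDerivAt _ hint
    rw [hicc]; exact hd
  have h1 : ‖∫ t in (0:ℝ)..s, φ' t‖ ≤ ∫ t in (0:ℝ)..s, ‖φ' t‖ :=
    intervalIntegral.norm_integral_le_integral_norm hs
  rw [heq] at h1
  have h2 : ‖φ s‖ - ‖φ 0‖ ≤ ‖φ s - φ 0‖ := by
    exact (norm_sub_norm_le _ _)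
  linarith

private lemma hasDerivAt_neg_log_one_sub {t : ℝ} (ht : t < 1) :
    HasDerivAt (fun s : ℝ => -Real.log (1 - s)) ((1 - t)⁻¹) t := by
  have h0 : (1:ℝ) - t ≠ 0 := by linarith
  have h1 : HasDerivAt (fun s : ℝ => (1:ℝ) - s) (-1) t := by
    simpa using (hasDerivAt_id t).const_sub 1
  have h2 : HasDerivAt (fun s : ℝ => Real.log (1 - s)) ((1 - t)⁻¹ * (-1)) t :=
    (Real.hasDerivAt_log h0).comp t h1
  have := h2.neg
  exact this.congr_deriv (by ring)

private lemma integrable_one_sub_inv {s : ℝ} (hs0 : 0 ≤ s) (hs1 : s < 1) :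
    IntervalIntegrable (fun t : ℝ => (1 - t)⁻¹) volume 0 s := by
  apply ContinuousOn.intervalIntegrable
  rw [Set.uIcc_of_le hs0]
  apply ContinuousOn.inv₀ (by fun_prop)
  intro t ht
  have := ht.2
  intro h; nlinarith [ht.2]

private lemma integral_one_sub_inv {s : ℝ} (hs0 : 0 ≤ s) (hs1 : s < 1) :
    ∫ t in (0:ℝ)..s, (1 - t)⁻¹ = Real.log (1 / (1 - s)) := by
  have : ∫ t in (0:ℝ)..s, (1 - t)⁻¹ =
      (fun s : ℝ => -Real.log (1 - s)) s - (fun s : ℝ => -Real.log (1 - s)) 0 := by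
    apply intervalIntegral.integral_eq_sub_of_hasDerivAt _ (integrable_one_sub_inv hs0 hs1)
    intro t ht
    rw [Set.uIcc_of_le hs0] at ht
    exact hasDerivAt_neg_log_one_sub (lt_of_le_of_lt ht.2 hs1)
  rw [this]
  simp [one_div, Real.log_inv]

private lemma continuousOn_log_one_sub {s : ℝ} (hs1 : s < 1) :
    ContinuousOn (fun t : ℝ => Real.log (1 / (1 - t))) (Icc 0 s) := by
  apply ContinuousOn.log
  · apply ContinuousOn.div continuousOn_const (by fun_prop)
    intro t ht; have := ht.2; intro h; nlinarith
  · intro t ht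
    have h1 : (0:ℝ) < 1 - t := by have := ht.2; linarith
    positivity

private lemma integral_log_one_sub_le {r : ℝ} (h0 : 0 ≤ r) (h1 : r < 1) :
    ∫ t in (0:ℝ)..r, Real.log (1 / (1 - t)) ≤ 1 := by
  have hF : ∀ t ∈ Set.uIcc (0:ℝ) r, HasDerivAt (fun s : ℝ => (1 - s) * Real.log (1 - s) + s)
      (Real.log (1 / (1 - t))) t := by
    intro t ht
    rw [Set.uIcc_of_le h0] at ht
    have htlt : t < 1 := lt_of_le_of_lt ht.2 h1
    have h0' : (1:ℝ) - t ≠ 0 := by linarith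
    have ha : HasDerivAt (fun s : ℝ => (1:ℝ) - s) (-1) t := by
      simpa using (hasDerivAt_id t).const_sub 1
    have hb : HasDerivAt (fun s : ℝ => Real.log (1 - s)) ((1 - t)⁻¹ * (-1)) t :=
      (Real.hasDerivAt_log h0').comp t ha
    have hc := (ha.mul hb).add (hasDerivAt_id t)
    refine hc.congr_deriv ?_
    have hm : (1 - t) * ((1 - t)⁻¹ * -1) = -1 := by rw [← mul_assoc, mul_inv_cancel₀ h0', one_mul]
    rw [one_div, Real.log_inv, hm]
    ring
  have hint : IntervalIntegrable (fun t : ℝ => Real.log (1 / (1 - t))) volume 0 r := by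
    apply ContinuousOn.intervalIntegrable
    rw [Set.uIcc_of_le h0]
    exact continuousOn_log_one_sub h1
  have := intervalIntegral.integral_eq_sub_of_hasDerivAt hF hint
  rw [this]
  have hlr : Real.log (1 - r) ≤ 0 := Real.log_nonpos (by linarith) (by linarith)
  have h1r : (0:ℝ) ≤ 1 - r := by linarith
  norm_num
  nlinarith
set_option maxHeartbeats 1000000 in
theorem stmt14 (k : ℕ) (hk : 1 ≤ k) (n0 : ℝ) (hn0 : 1 < n0)
    (A : ℕ → ℂ → ℂ) (hA : ∀ j < k, DifferentiableOn ℂ (A j) (ball (0:ℂ) 1))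
    (hABloch : ∀ j < k, ∃ M : ℝ, ∀ z ∈ ball (0:ℂ) 1,
      ‖deriv (A j) z‖ * (1 - ‖z‖ ^ 2) ≤ M)
    (θ ν : ℝ) (hθ : θ ∈ Set.Ico 0 (2 * Real.pi)) (hν : ν ∈ Set.Ico (0:ℝ) 1)
    (hzθ : ∃ j < k, A j ((ν : ℂ) * Complex.exp ((θ : ℂ) * Complex.I)) ≠ 0)
    (f : ℂ → ℂ) (hf : DifferentiableOn ℂ f (ball (0:ℂ) 1))
    (heq : ∀ z ∈ ball (0:ℂ) 1,
      (iteratedDeriv k f z) ^ ((n0 : ℝ) : ℂ) +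
        ∑ j ∈ Finset.range k, A j z * (iteratedDeriv j f z) ^ ((n0 : ℝ) : ℂ) = 0) :
    ∃ C > (0:ℝ), ∀ r : ℝ,
      max ν ((Real.exp 1 - 1) / (Real.exp 1 + 1)) ≤ r → r < 1 →
      ‖deriv f ((r : ℂ) * Complex.exp ((θ : ℂ) * Complex.I))‖ ^ n0 ≤
        C * Real.log (1 / (1 - r)) := by
  clear hzθ hν hθ
  have hn0' : (0:ℝ) < n0 := by linarith
  have hp0 : (0:ℝ) < 1/n0 := by positivity
  have hp1 : 1/n0 ≤ 1 := by rw [div_le_one hn0']; linarith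
  set e : ℂ := Complex.exp ((θ:ℂ) * Complex.I) with he
  have habse : ‖e‖ = 1 := Complex.norm_exp_ofReal_mul_I θ
  have hmem : ∀ t : ℝ, |t| < 1 → (t:ℂ) * e ∈ ball (0:ℂ) 1 := by
    intro t ht
    rw [mem_ball_zero_iff, norm_mul, habse, Complex.norm_real, Real.norm_eq_abs, mul_one]
    exact ht
  have hmem' : ∀ t : ℝ, t ∈ Ico (0:ℝ) 1 → (t:ℂ) * e ∈ ball (0:ℂ) 1 := by
    intro t ht
    exact hmem t (by rw [abs_of_nonneg ht.1]; exact ht.2)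
  -- analyticity
  have hfa : ∀ j : ℕ, AnalyticOnNhd ℂ (iteratedDeriv j f) (ball (0:ℂ) 1) := by
    intro j; induction j with
    | zero => simpa [iteratedDeriv_zero] using hf.analyticOnNhd isOpen_ball
    | succ n ih => rw [iteratedDeriv_succ]; exact ih.deriv
  have hAa : ∀ j, j < k → AnalyticOnNhd ℂ (A j) (ball (0:ℂ) 1) :=
    fun j hj => (hA j hj).analyticOnNhd isOpen_ball
  -- derivative along ray
  have hraymap : ContinuousOn (fun t : ℝ => (t:ℂ) * e) (Ioo (-1:ℝ) 1) :=
    (Complex.continuous_ofReal.mul continuous_const).continuousOn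
  have hraymem : MapsTo (fun t : ℝ => (t:ℂ) * e) (Ioo (-1:ℝ) 1) (ball (0:ℂ) 1) := by
    intro t ht
    exact hmem t (abs_lt.2 ⟨ht.1, ht.2⟩)
  have hray : ∀ (G G' : ℂ → ℂ) (t : ℝ), (∀ z ∈ ball (0:ℂ) 1, HasDerivAt G (G' z) z) →
      t ∈ Ico (0:ℝ) 1 →
      HasDerivAt (fun s : ℝ => G ((s:ℂ)*e)) (e * G' ((t:ℂ)*e)) t := by
    intro G G' t hG ht
    have h1 : HasDerivAt (fun w : ℂ => G (w * e)) (G' ((t:ℂ)*e) * e) (t:ℂ) :=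
      HasDerivAt.comp (t:ℂ) (hG _ (hmem' t ht)) (hasDerivAt_mul_const e)
    have h2 := h1.comp_ofReal
    simpa [Function.comp, mul_comm] using h2
  have hgd : ∀ (j:ℕ), ∀ z ∈ ball (0:ℂ) 1,
      HasDerivAt (iteratedDeriv j f) (iteratedDeriv (j+1) f z) z := by
    intro j z hz
    rw [iteratedDeriv_succ]
    exact ((hfa j z hz).differentiableAt).hasDerivAt
  -- continuity of compositions along the ray
  have hgc : ∀ j : ℕ, ContinuousOn (fun t : ℝ => iteratedDeriv j f ((t:ℂ)*e)) (Ioo (-1:ℝ) 1) :=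
    fun j => ((hfa j).continuousOn).comp hraymap hraymem
  have hAc : ∀ j, j < k → ContinuousOn (fun t : ℝ => A j ((t:ℂ)*e)) (Ioo (-1:ℝ) 1) :=
    fun j hj => ((hAa j hj).continuousOn).comp hraymap hraymem
  -- key functions
  set u : ℝ → ℝ := fun t => ∑ j ∈ Finset.range k, ‖iteratedDeriv j f ((t:ℂ)*e)‖
    with hudef
  set S : ℝ → ℝ := fun t => ∑ j ∈ Finset.range k, ‖A j ((t:ℂ)*e)‖ with hSdef
  set w : ℝ → ℝ := fun t => 1 + S t ^ (1/n0 : ℝ) with hwdef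
  have hu0 : ∀ t, 0 ≤ u t := by
    intro t; apply Finset.sum_nonneg; intro j _; exact norm_nonneg _
  have hS0 : ∀ t, 0 ≤ S t := by
    intro t; apply Finset.sum_nonneg; intro j _; exact norm_nonneg _
  have hw0 : ∀ t, 0 ≤ w t := by
    intro t
    have := Real.rpow_nonneg (hS0 t) (1/n0)
    simp only [hwdef]; linarith
  have huc : ContinuousOn u (Ioo (-1:ℝ) 1) := by
    apply continuousOn_finset_sum
    intro j _
    exact continuous_norm.comp_continuousOn (hgc j)
  have hSc : ContinuousOn S (Ioo (-1:ℝ) 1) := by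
    apply continuousOn_finset_sum
    intro j hj
    exact continuous_norm.comp_continuousOn (hAc j (Finset.mem_range.1 hj))
  have hwc : ContinuousOn w (Ioo (-1:ℝ) 1) :=
    continuousOn_const.add (hSc.rpow_const (fun x _ => Or.inr hp0.le))
  -- the key pointwise bound from the equation
  have hkey : ∀ t ∈ Ico (0:ℝ) 1,
      ‖iteratedDeriv k f ((t:ℂ)*e)‖ ≤ S t ^ (1/n0 : ℝ) * u t := by
    intro t ht
    have hz : (t:ℂ) * e ∈ ball (0:ℂ) 1 := hmem' t ht
    have h1 : (iteratedDeriv k f ((t:ℂ)*e)) ^ ((n0:ℝ):ℂ) =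
        -∑ j ∈ Finset.range k, A j ((t:ℂ)*e) * (iteratedDeriv j f ((t:ℂ)*e)) ^ ((n0:ℝ):ℂ) :=
      eq_neg_of_add_eq_zero_left (heq _ hz)
    have habs : ∀ j : ℕ, ‖(iteratedDeriv j f ((t:ℂ)*e)) ^ ((n0:ℝ):ℂ)‖ =
        ‖iteratedDeriv j f ((t:ℂ)*e)‖ ^ n0 := fun j => Complex.norm_cpow_real _ _
    have h2 : ‖iteratedDeriv k f ((t:ℂ)*e)‖ ^ n0 ≤ S t * u t ^ n0 := by
      rw [← habs k, h1, norm_neg]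
      refine le_trans (norm_sum_le _ _) ?_
      rw [hSdef]
      simp only []
      rw [Finset.sum_mul]
      apply Finset.sum_le_sum
      intro j hj
      rw [norm_mul, habs j]
      refine mul_le_mul_of_nonneg_left ?_ (norm_nonneg _)
      refine Real.rpow_le_rpow (norm_nonneg _) ?_ hn0'.le
      simp only [hudef]
      exact Finset.single_le_sum (f := fun i => ‖iteratedDeriv i f ((t:ℂ)*e)‖)
        (fun i _ => norm_nonneg _) hj
    have habs0 : (0:ℝ) ≤ ‖iteratedDeriv k f ((t:ℂ)*e)‖ := norm_nonneg _
    have h3 := Real.rpow_le_rpow (Real.rpow_nonneg habs0 _) h2 hp0.le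
    have hcancel : n0 * (1/n0) = 1 := by field_simp
    have hcancel' : (1/n0) * n0 = 1 := by field_simp
    rw [← Real.rpow_mul habs0, hcancel, Real.rpow_one,
      Real.mul_rpow (hS0 t) (Real.rpow_nonneg (hu0 t) _),
      ← Real.rpow_mul (hu0 t), hcancel, Real.rpow_one] at h3
    exact h3
  -- the integral inequality
  have hii : ∀ r ∈ Ico (0:ℝ) 1, ∀ s ∈ Icc 0 r,
      u s ≤ u 0 + ∫ t in (0:ℝ)..s, w t * u t := by
    intro r hr s hs
    have hs1 : s < 1 := lt_of_le_of_lt hs.2 hr.2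
    have hs0 : 0 ≤ s := hs.1
    have hsubI : Icc (0:ℝ) s ⊆ Ioo (-1:ℝ) 1 :=
      fun x hx => ⟨by linarith [hx.1], lt_of_le_of_lt hx.2 hs1⟩
    have hIco : ∀ t ∈ Icc (0:ℝ) s, t ∈ Ico (0:ℝ) 1 :=
      fun t htt => ⟨htt.1, lt_of_le_of_lt htt.2 hs1⟩
    have hcint : ∀ j : ℕ, ContinuousOn
        (fun t : ℝ => ‖e * iteratedDeriv (j+1) f ((t:ℂ)*e)‖) (Icc 0 s) := by
      intro j
      apply continuous_norm.comp_continuousOn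
      exact (continuousOn_const.mul (hgc (j+1))).mono hsubI
    have hterm : ∀ j ∈ Finset.range k,
        ‖iteratedDeriv j f ((s:ℂ)*e)‖ ≤
          ‖iteratedDeriv j f (((0:ℝ):ℂ)*e)‖ +
          ∫ t in (0:ℝ)..s, ‖e * iteratedDeriv (j+1) f ((t:ℂ)*e)‖ := by
      intro j _
      apply norm_le_add_integral hs0
      · intro t htt
        exact hray _ _ t (hgd j) (hIco t htt)
      · exact (continuousOn_const.mul (hgc (j+1))).mono hsubI
    have hintj : ∀ j ∈ Finset.range k, IntervalIntegrable
        (fun t : ℝ => ‖e * iteratedDeriv (j+1) f ((t:ℂ)*e)‖) volume 0 s := by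
      intro j _
      apply ContinuousOn.intervalIntegrable
      rw [Set.uIcc_of_le hs0]
      exact hcint j
    have hsum : u s ≤ u 0 + ∑ j ∈ Finset.range k,
        ∫ t in (0:ℝ)..s, ‖e * iteratedDeriv (j+1) f ((t:ℂ)*e)‖ := by
      simp only [hudef]
      refine le_trans (Finset.sum_le_sum hterm) ?_
      rw [Finset.sum_add_distrib]
    have hswap : ∑ j ∈ Finset.range k,
        ∫ t in (0:ℝ)..s, ‖e * iteratedDeriv (j+1) f ((t:ℂ)*e)‖ =
        ∫ t in (0:ℝ)..s, ∑ j ∈ Finset.range k,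
          ‖e * iteratedDeriv (j+1) f ((t:ℂ)*e)‖ :=
      (intervalIntegral.integral_finset_sum hintj).symm
    have hpt : ∀ t ∈ Icc (0:ℝ) s,
        (∑ j ∈ Finset.range k, ‖e * iteratedDeriv (j+1) f ((t:ℂ)*e)‖) ≤
          w t * u t := by
      intro t htt
      have ht1 : t ∈ Ico (0:ℝ) 1 := hIco t htt
      have he1 : ∀ j : ℕ, ‖e * iteratedDeriv (j+1) f ((t:ℂ)*e)‖ =
          ‖iteratedDeriv (j+1) f ((t:ℂ)*e)‖ := by
        intro j; rw [norm_mul, habse, one_mul]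
      rw [Finset.sum_congr rfl (fun j _ => he1 j)]
      have hsum' : (∑ j ∈ Finset.range k, ‖iteratedDeriv (j+1) f ((t:ℂ)*e)‖)
          = (∑ j ∈ Finset.range (k+1), ‖iteratedDeriv j f ((t:ℂ)*e)‖)
            - ‖iteratedDeriv 0 f ((t:ℂ)*e)‖ := by
        rw [Finset.sum_range_succ' (fun j => ‖iteratedDeriv j f ((t:ℂ)*e)‖) k]
        ring
      have hsum'' : (∑ j ∈ Finset.range (k+1), ‖iteratedDeriv j f ((t:ℂ)*e)‖)
          = u t + ‖iteratedDeriv k f ((t:ℂ)*e)‖ := by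
        rw [Finset.sum_range_succ]
      have hk' := hkey t ht1
      have ha0 : (0:ℝ) ≤ ‖iteratedDeriv 0 f ((t:ℂ)*e)‖ := norm_nonneg _
      have hwu : w t * u t = u t + S t ^ (1/n0:ℝ) * u t := by
        simp only [hwdef]; ring
      rw [hsum', hsum'', hwu]
      linarith
    have hmono : ∫ t in (0:ℝ)..s, (∑ j ∈ Finset.range k,
        ‖e * iteratedDeriv (j+1) f ((t:ℂ)*e)‖) ≤
        ∫ t in (0:ℝ)..s, w t * u t := by
      apply intervalIntegral.integral_mono_on hs0 ?_ ?_ hpt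
      · apply ContinuousOn.intervalIntegrable
        rw [Set.uIcc_of_le hs0]
        apply continuousOn_finset_sum
        intro j _
        exact hcint j
      · apply ContinuousOn.intervalIntegrable
        rw [Set.uIcc_of_le hs0]
        exact (hwc.mul huc).mono hsubI
    rw [hswap] at hsum
    linarith
  -- coefficient bounds
  have hMex : ∀ j : ℕ, ∃ M : ℝ, 0 ≤ M ∧ (j < k → ∀ z ∈ ball (0:ℂ) 1,
      ‖deriv (A j) z‖ * (1 - ‖z‖ ^ 2) ≤ M) := by
    intro j
    by_cases hj : j < k
    · obtain ⟨M, hM⟩ := hABloch j hj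
      exact ⟨max M 0, le_max_right _ _, fun _ z hz => (hM z hz).trans (le_max_left _ _)⟩
    · exact ⟨0, le_refl _, fun h => absurd h hj⟩
  choose M hM0 hM using hMex
  have hAb : ∀ j, j < k → ∀ t ∈ Ico (0:ℝ) 1,
      ‖A j ((t:ℂ)*e)‖ ≤ ‖A j 0‖ + M j * Real.log (1/(1-t)) := by
    intro j hj t ht
    have hsubI : Icc (0:ℝ) t ⊆ Ioo (-1:ℝ) 1 :=
      fun x hx => ⟨by linarith [hx.1], lt_of_le_of_lt hx.2 ht.2⟩
    have hd : ∀ s ∈ Icc (0:ℝ) t, HasDerivAt (fun τ : ℝ => A j ((τ:ℂ)*e))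
        (e * deriv (A j) ((s:ℂ)*e)) s := by
      intro s hss
      refine hray _ _ s ?_ ⟨hss.1, lt_of_le_of_lt hss.2 ht.2⟩
      intro z hz
      exact ((hAa j hj z hz).differentiableAt).hasDerivAt
    have hdc : ContinuousOn (fun s : ℝ => e * deriv (A j) ((s:ℂ)*e)) (Icc 0 t) := by
      refine ContinuousOn.mono ?_ hsubI
      exact continuousOn_const.mul (((hAa j hj).deriv.continuousOn).comp hraymap hraymem)
    have h1 := norm_le_add_integral ht.1 hd hdc
    have h00 : (((0:ℝ):ℂ)) * e = 0 * e := by norm_num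
    rw [h00, zero_mul] at h1
    have hptb : ∀ s ∈ Icc (0:ℝ) t, ‖e * deriv (A j) ((s:ℂ)*e)‖ ≤
        M j * (1-s)⁻¹ := by
      intro s hss
      rw [norm_mul, habse, one_mul]
      have hs1 : s < 1 := lt_of_le_of_lt hss.2 ht.2
      have hzb := hM j hj _ (hmem' s ⟨hss.1, hs1⟩)
      have habz : ‖(s:ℂ)*e‖ = s := by
        rw [norm_mul, habse, mul_one, Complex.norm_real, Real.norm_eq_abs, abs_of_nonneg hss.1]
      rw [habz] at hzb
      have h2 : (0:ℝ) < 1 - s^2 := by nlinarith [hss.1]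
      have h2' : (0:ℝ) < 1 - s := by linarith
      have h3 : ‖deriv (A j) ((s:ℂ)*e)‖ ≤ M j / (1 - s^2) :=
        (le_div_iff₀ h2).2 hzb
      have h4 : M j / (1 - s^2) ≤ M j / (1-s) := by
        apply div_le_div_of_nonneg_left (hM0 j) h2'
        nlinarith [hss.1]
      rw [← div_eq_mul_inv]
      linarith
    have hintL : IntervalIntegrable (fun s : ℝ => ‖e * deriv (A j) ((s:ℂ)*e)‖)
        volume 0 t := by
      apply ContinuousOn.intervalIntegrable
      rw [Set.uIcc_of_le ht.1]
      exact continuous_norm.comp_continuousOn hdc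
    have hintR : IntervalIntegrable (fun s : ℝ => M j * (1-s)⁻¹) volume 0 t :=
      (integrable_one_sub_inv ht.1 ht.2).const_mul (M j)
    have hib := intervalIntegral.integral_mono_on ht.1 hintL hintR hptb
    have hval : ∫ s in (0:ℝ)..t, M j * (1-s)⁻¹ = M j * Real.log (1/(1-t)) := by
      rw [intervalIntegral.integral_const_mul, integral_one_sub_inv ht.1 ht.2]
    rw [hval] at hib
    linarith
  set c1 : ℝ := 2 + ∑ j ∈ Finset.range k, ‖A j 0‖ with hc1def
  set c2 : ℝ := ∑ j ∈ Finset.range k, M j with hc2def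
  have hc10 : 0 ≤ c1 := by
    have : 0 ≤ ∑ j ∈ Finset.range k, ‖A j 0‖ :=
      Finset.sum_nonneg (fun j _ => norm_nonneg _)
    simp only [hc1def]; linarith
  have hc20 : 0 ≤ c2 := Finset.sum_nonneg (fun j _ => hM0 j)
  have hSle : ∀ t ∈ Ico (0:ℝ) 1, S t ≤ (c1 - 2) + c2 * Real.log (1/(1-t)) := by
    intro t ht
    have h1 : S t ≤ ∑ j ∈ Finset.range k,
        (‖A j 0‖ + M j * Real.log (1/(1-t))) := by
      apply Finset.sum_le_sum
      intro j hj
      exact hAb j (Finset.mem_range.1 hj) t ht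
    rw [Finset.sum_add_distrib, ← Finset.sum_mul] at h1
    simp only [hc1def, hc2def]
    linarith
  have hwle : ∀ t ∈ Ico (0:ℝ) 1, w t ≤ c1 + c2 * Real.log (1/(1-t)) := by
    intro t ht
    have h1 : S t ^ (1/n0 : ℝ) ≤ 1 + S t := rpow_le_one_add (hS0 t) hp0 hp1
    have h2 := hSle t ht
    simp only [hwdef]
    linarith
  -- integral bound on w
  have hWle : ∀ r ∈ Ico (0:ℝ) 1, ∫ t in (0:ℝ)..r, w t ≤ c1 + c2 := by
    intro r hr
    have hsubI : Icc (0:ℝ) r ⊆ Ioo (-1:ℝ) 1 :=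
      fun x hx => ⟨by linarith [hx.1], lt_of_le_of_lt hx.2 hr.2⟩
    have hintlog : IntervalIntegrable (fun t : ℝ => Real.log (1/(1-t))) volume 0 r := by
      apply ContinuousOn.intervalIntegrable
      rw [Set.uIcc_of_le hr.1]
      exact continuousOn_log_one_sub hr.2
    have hintw : IntervalIntegrable w volume 0 r := by
      apply ContinuousOn.intervalIntegrable
      rw [Set.uIcc_of_le hr.1]
      exact hwc.mono hsubI
    have hintrhs : IntervalIntegrable (fun t : ℝ => c1 + c2 * Real.log (1/(1-t)))
        volume 0 r := intervalIntegrable_const.add (hintlog.const_mul c2)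
    have h1 := intervalIntegral.integral_mono_on hr.1 hintw hintrhs
      (fun t htt => hwle t ⟨htt.1, lt_of_le_of_lt htt.2 hr.2⟩)
    have h2 : ∫ t in (0:ℝ)..r, (c1 + c2 * Real.log (1/(1-t))) =
        c1 * r + c2 * ∫ t in (0:ℝ)..r, Real.log (1/(1-t)) := by
      rw [intervalIntegral.integral_add intervalIntegrable_const (hintlog.const_mul c2),
        intervalIntegral.integral_const, intervalIntegral.integral_const_mul]
      simp [mul_comm]
    have h3 := integral_log_one_sub_le hr.1 hr.2
    have h4 : (0:ℝ) ≤ ∫ t in (0:ℝ)..r, Real.log (1/(1-t)) := by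
      apply intervalIntegral.integral_nonneg hr.1
      intro t htt
      apply Real.log_nonneg
      have h5 : (0:ℝ) < 1 - t := by linarith [htt.2, hr.2]
      rw [le_div_iff₀ h5]
      linarith [htt.1]
    have h6 : c1 * r ≤ c1 := by nlinarith [hr.1, hr.2, hc10]
    have h7 : c2 * ∫ t in (0:ℝ)..r, Real.log (1/(1-t)) ≤ c2 * 1 :=
      mul_le_mul_of_nonneg_left h3 hc20
    rw [h2] at h1
    have h7' : c2 * ∫ t in (0:ℝ)..r, Real.log (1/(1-t)) ≤ c2 := by
      rw [mul_one] at h7; exact h7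
    exact le_trans h1 (add_le_add h6 h7')
  -- Gronwall
  set B : ℝ := u 0 * Real.exp (c1 + c2) with hBdef
  have hB0 : 0 ≤ B := mul_nonneg (hu0 0) (Real.exp_nonneg _)
  have hB : ∀ r ∈ Ico (0:ℝ) 1, u r ≤ B := by
    intro r hr
    have hsub : Icc (0:ℝ) r ⊆ Ioo (-1:ℝ) 1 := by
      intro x hx
      constructor <;> [linarith [hx.1]; exact lt_of_le_of_lt hx.2 hr.2]
    have h1 := gronwall_aux hr.1 hsub huc hwc (fun t _ => hw0 t) (hii r hr)
    have h2 : Real.exp (∫ t in (0:ℝ)..r, w t) ≤ Real.exp (c1 + c2) :=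
      Real.exp_le_exp.2 (hWle r hr)
    calc u r ≤ u 0 * Real.exp (∫ t in (0:ℝ)..r, w t) := h1
      _ ≤ u 0 * Real.exp (c1 + c2) := mul_le_mul_of_nonneg_left h2 (hu0 0)
  -- final derivative bound
  have hfin : ∃ D1 D2 : ℝ, 0 ≤ D1 ∧ 0 ≤ D2 ∧ ∀ r ∈ Ico (0:ℝ) 1,
      ‖deriv f ((r:ℂ)*e)‖ ^ n0 ≤ D1 + D2 * Real.log (1/(1-r)) := by
    have hBn0 : (0:ℝ) ≤ B ^ n0 := Real.rpow_nonneg hB0 _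
    rcases eq_or_lt_of_le hk with hk1 | hk2
    · -- k = 1
      refine ⟨c1 * B ^ n0, c2 * B ^ n0, mul_nonneg hc10 hBn0, mul_nonneg hc20 hBn0, ?_⟩
      intro r hr
      have hd1 : deriv f ((r:ℂ)*e) = iteratedDeriv k f ((r:ℂ)*e) := by
        rw [← hk1, iteratedDeriv_one]
      rw [hd1]
      have habs0 : (0:ℝ) ≤ ‖iteratedDeriv k f ((r:ℂ)*e)‖ :=
        norm_nonneg _
      have h1 := hkey r hr
      have h2 : ‖iteratedDeriv k f ((r:ℂ)*e)‖ ^ n0 ≤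
          (S r ^ (1/n0:ℝ) * u r) ^ n0 := Real.rpow_le_rpow habs0 h1 hn0'.le
      have hcancel : (1/n0) * n0 = 1 := by field_simp
      have h3 : (S r ^ (1/n0:ℝ) * u r) ^ n0 = S r * u r ^ n0 := by
        rw [Real.mul_rpow (Real.rpow_nonneg (hS0 r) _) (hu0 r),
          ← Real.rpow_mul (hS0 r), hcancel, Real.rpow_one]
      have h4 : u r ^ n0 ≤ B ^ n0 := Real.rpow_le_rpow (hu0 r) (hB r hr) hn0'.le
      have h5 : S r ≤ c1 + c2 * Real.log (1/(1-r)) := by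
        have := hSle r hr
        linarith
      have hlognn : 0 ≤ Real.log (1/(1-r)) := by
        apply Real.log_nonneg
        have h6 : (0:ℝ) < 1 - r := by linarith [hr.2]
        rw [le_div_iff₀ h6]
        linarith [hr.1]
      have h7 : S r * u r ^ n0 ≤ S r * B ^ n0 :=
        mul_le_mul_of_nonneg_left h4 (hS0 r)
      have h8 : S r * B ^ n0 ≤ (c1 + c2 * Real.log (1/(1-r))) * B ^ n0 :=
        mul_le_mul_of_nonneg_right h5 hBn0
      have h9 : (c1 + c2 * Real.log (1/(1-r))) * B ^ n0 =
          c1 * B ^ n0 + c2 * B ^ n0 * Real.log (1/(1-r)) := by ring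
      rw [h3] at h2
      rw [h9] at h8
      linarith
    · -- 1 < k
      refine ⟨B ^ n0, 0, hBn0, le_refl 0, ?_⟩
      intro r hr
      have habs0 : (0:ℝ) ≤ ‖deriv f ((r:ℂ)*e)‖ := norm_nonneg _
      have h1 : ‖deriv f ((r:ℂ)*e)‖ ≤ u r := by
        rw [← iteratedDeriv_one]
        simp only [hudef]
        exact Finset.single_le_sum
          (f := fun i => ‖iteratedDeriv i f ((r:ℂ)*e)‖)
          (fun i _ => norm_nonneg _) (Finset.mem_range.2 hk2)
      have h2 : ‖deriv f ((r:ℂ)*e)‖ ^ n0 ≤ B ^ n0 :=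
        Real.rpow_le_rpow habs0 (h1.trans (hB r hr)) hn0'.le
      rw [zero_mul]
      linarith
  obtain ⟨D1, D2, hD1, hD2, hD⟩ := hfin
  -- conclusion
  set ℓ0 : ℝ := Real.log ((Real.exp 1 + 1)/2) with hℓ0def
  have hε : (1:ℝ) < (Real.exp 1 + 1)/2 := by
    have := Real.exp_one_gt_d9
    norm_num at this ⊢
    linarith
  have hℓ0 : 0 < ℓ0 := Real.log_pos hε
  refine ⟨max 1 (D1/ℓ0 + D2), lt_of_lt_of_le one_pos (le_max_left _ _), ?_⟩
  intro r hr1 hr2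
  have hq0 : (0:ℝ) ≤ (Real.exp 1 - 1)/(Real.exp 1 + 1) := by
    have h1 : (1:ℝ) < Real.exp 1 := by
      have := Real.exp_one_gt_d9; linarith
    have h2 : (0:ℝ) < Real.exp 1 + 1 := by linarith
    apply div_nonneg <;> linarith
  have hr0 : 0 ≤ r := le_trans (le_trans hq0 (le_max_right _ _)) hr1
  have hrIco : r ∈ Ico (0:ℝ) 1 := ⟨hr0, hr2⟩
  have h1r : (0:ℝ) < 1 - r := by linarith
  have hloglb : ℓ0 ≤ Real.log (1/(1-r)) := by
    apply Real.log_le_log (by positivity)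
    have hq : (Real.exp 1 - 1)/(Real.exp 1 + 1) ≤ r := le_trans (le_max_right _ _) hr1
    have hE : (0:ℝ) < Real.exp 1 + 1 := by positivity
    rw [div_le_div_iff₀ (by norm_num) h1r]
    have hle : 1 - r ≤ 1 - (Real.exp 1 - 1)/(Real.exp 1 + 1) := by linarith
    have h2 : 1 - (Real.exp 1 - 1)/(Real.exp 1 + 1) = 2/(Real.exp 1 + 1) := by
      field_simp
      try ring
      try norm_num
    have h3 : 1 - r ≤ 2/(Real.exp 1 + 1) := h2 ▸ hle
    have h4 : (1 - r) * (Real.exp 1 + 1) ≤ 2 := (le_div_iff₀ hE).1 h3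
    nlinarith [h4]
  have hlog0 : 0 < Real.log (1/(1-r)) := lt_of_lt_of_le hℓ0 hloglb
  have hmain := hD r hrIco
  have hstep : D1 + D2 * Real.log (1/(1-r)) ≤ (D1/ℓ0 + D2) * Real.log (1/(1-r)) := by
    have h1 : D1 = (D1/ℓ0) * ℓ0 := by field_simp
    have h2 : (D1/ℓ0) * ℓ0 ≤ (D1/ℓ0) * Real.log (1/(1-r)) :=
      mul_le_mul_of_nonneg_left hloglb (div_nonneg hD1 hℓ0.le)
    nlinarith
  have hstep2 : (D1/ℓ0 + D2) * Real.log (1/(1-r)) ≤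
      max 1 (D1/ℓ0 + D2) * Real.log (1/(1-r)) :=
    mul_le_mul_of_nonneg_right (le_max_right _ _) hlog0.le
  calc ‖deriv f ((r:ℂ)*e)‖ ^ n0 ≤ D1 + D2 * Real.log (1/(1-r)) := hmain
    _ ≤ (D1/ℓ0 + D2) * Real.log (1/(1-r)) := hstep
    _ ≤ max 1 (D1/ℓ0 + D2) * Real.log (1/(1-r)) := hstep2
end
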